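/- arXiv:2008.00650 — 2 statements merged into one kernel-verified Lean document; each statement's English description precedes it below -/
import Mathlib

section
/- The language U over the alphabet {[, ], ⋆, ♯} is recognized by a deterministic order-2 collapsible pushdown automaton. -/
namespace HOPDA

/-- Iterated exponentiation `pow` from the paper:
`pow [] = 1`, `pow (m :: l) = (1 + m) ^ pow l - 1`. -/
def pow : List ℕ → ℕ
  | [] => 1
  | m :: l => (1 + m) ^ pow l - 1

/-! ### Higher-order stacks.

Stacks are represented positionlessly (nested lists of symbols); the positions of the
paper are represented by *addresses*: lists of bottom-based indices leading from the
outermost level into the stack.  Equality of contents is positionless equality `≅`. -/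

inductive St (Γ : Type) : Type where
  | leaf (γ : Γ) : St Γ
  | node (l : List (St Γ)) : St Γ

/-- `IsValid k s` : `s` is a stack of order `k` all of whose component stacks are nonempty. -/
def IsValid {Γ : Type} : ℕ → St Γ → Prop
  | 0, St.leaf _ => True
  | 0, St.node _ => False
  | _ + 1, St.leaf _ => False
  | k + 1, St.node l => l ≠ [] ∧ ∀ t ∈ l, IsValid k t

/-- The address of the topmost substack `d` levels below the surface
(indices count from the bottom of each stack, as the positions in the paper do). -/
def topAddr {Γ : Type} : St Γ → ℕ → List ℕ
  | _, 0 => []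
  | St.leaf _, _ + 1 => []
  | St.node l, d + 1 => (l.length - 1) :: topAddr (l.getLastD (St.node [])) d

/-- The substack sitting at a given address. -/
def sub? {Γ : Type} : St Γ → List ℕ → Option (St Γ)
  | s, [] => some s
  | St.leaf _, _ :: _ => none
  | St.node l, i :: p =>
      match l[i]? with
      | some t => sub? t p
      | none => none

/-- Modify the substack at a given address. -/
def modAt {Γ : Type} : St Γ → List ℕ → (St Γ → Option (St Γ)) → Option (St Γ)
  | s, [], f => f s
  | St.leaf _, _ :: _, _ => none
  | St.node l, i :: p, f =>
      match l[i]? with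
      | none => none
      | some t =>
          match modAt t p f with
          | none => none
          | some t' => some (St.node (l.set i t'))

/-- The topmost stack symbol of an order-`n` stack. -/
def topLeaf? {Γ : Type} (n : ℕ) (s : St Γ) : Option Γ :=
  match sub? s (topAddr s n) with
  | some (St.leaf γ) => some γ
  | _ => none

/-- The content of the topmost `k`-stack of an order-`n` stack (`top^k`);
equality of these contents is positionless equality `≅` of topmost `k`-stacks. -/
def topStk {Γ : Type} (n : ℕ) (s : St Γ) (k : ℕ) : Option (St Γ) :=
  sub? s (topAddr s (n - k))

/-- Number of components of the (composite) stack at the given address. -/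
def sizeAt {Γ : Type} (s : St Γ) (p : List ℕ) : ℕ :=
  match sub? s p with
  | some (St.node l) => l.length
  | _ => 0

/-- Remove the topmost component of a composite stack
(defined only when it has at least two components). -/
def popStk {Γ : Type} : St Γ → Option (St Γ)
  | St.node l => if 2 ≤ l.length then some (St.node l.dropLast) else none
  | St.leaf _ => none

/-- Duplicate the topmost `(r-1)`-stack of an `r`-stack,
replacing the topmost symbol of the new copy by `γ`. -/
def dupTop {Γ : Type} (r : ℕ) (γ : Γ) : St Γ → Option (St Γ)
  | St.node l =>
      match l.getLast? with
      | none => none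
      | some t =>
          match modAt t (topAddr t (r - 1)) (fun u =>
            match u with
            | St.leaf _ => some (St.leaf γ)
            | St.node _ => none) with
          | none => none
          | some t' => some (St.node (l ++ [t']))
  | St.leaf _ => none

/-- `push^r_γ` on an order-`n` stack. -/
def pushOp {Γ : Type} (n r : ℕ) (γ : Γ) (s : St Γ) : Option (St Γ) :=
  modAt s (topAddr s (n - r)) (dupTop r γ)

/-- `pop^r` on an order-`n` stack. -/
def popOp {Γ : Type} (n r : ℕ) (s : St Γ) : Option (St Γ) :=
  modAt s (topAddr s (n - r)) popStk

/-- Stack operations of an order-`n` pushdown automaton. -/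
inductive Op (Γ : Type) where
  | pop (k : ℕ)
  | push (k : ℕ) (γ : Γ)

def applyOp {Γ : Type} (n : ℕ) : Op Γ → St Γ → Option (St Γ)
  | Op.pop k, s => if 1 ≤ k ∧ k ≤ n then popOp n k s else none
  | Op.push k γ, s => if 1 ≤ k ∧ k ≤ n then pushOp n k γ s else none

/-- The one-step history function on addresses: for the address of a substack of
`op(s)` it returns the address of the substack of `s` from which it originates. -/
def histStep {Γ : Type} (n : ℕ) : Op Γ → St Γ → List ℕ → List ℕ
  | Op.pop _, _, p => p
  | Op.push r _, s, p =>
      let m := n - r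
      let ta := topAddr s m
      let sz := sizeAt s ta
      if p.take (m + 1) = ta ++ [sz] then p.set m (sz - 1) else p

/-! ### Deterministic order-`n` pushdown automata -/

inductive Trans (A Γ Q : Type) where
  | read (f : A → Q)
  | op (q : Q) (o : Op Γ)

/-- A deterministic order-`n` pushdown automaton. -/
structure DPDA (n : ℕ) (A Γ : Type) where
  Q : Type
  finQ : Finite Q
  qI : Q
  γI : Γ
  F : Set Q
  δ : Q → Γ → Trans A Γ Q
  read_inj : ∀ q γ f, δ q γ = Trans.read f → Function.Injective f

/-- One step of an `n`-DPDA; the label records the letter read (if any). -/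
inductive Step {n : ℕ} {A Γ : Type} (D : DPDA n A Γ) :
    D.Q × St Γ → Option A → D.Q × St Γ → Prop where
  | read {q : D.Q} {s : St Γ} {γ : Γ} {f : A → D.Q} (a : A) :
      IsValid n s → topLeaf? n s = some γ → D.δ q γ = Trans.read f →
      Step D (q, s) (some a) (f a, s)
  | op {q : D.Q} {s s' : St Γ} {γ : Γ} {q' : D.Q} {o : Op Γ} :
      IsValid n s → topLeaf? n s = some γ → D.δ q γ = Trans.op q' o →
      applyOp n o s = some s' →
      Step D (q, s) none (q', s')

/-- A (finite) run `R(0), …, R(len)` of an `n`-DPDA. -/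
structure Run {n : ℕ} {A Γ : Type} (D : DPDA n A Γ) where
  len : ℕ
  cfg : ℕ → D.Q × St Γ
  lab : ℕ → Option A
  ok : ∀ i < len, Step D (cfg i) (lab i) (cfg (i + 1))

namespace Run

variable {n : ℕ} {A Γ : Type} {D : DPDA n A Γ}

/-- The word read by a run. -/
def word (R : Run D) : List A := (List.range R.len).filterMap R.lab

/-- The subrun `R[i,j]`. -/
def sub (R : Run D) (i j : ℕ) : Run D where
  len := min j R.len - i
  cfg := fun t => R.cfg (i + t)
  lab := fun t => R.lab (i + t)
  ok := fun t ht => R.ok (i + t) (by omega)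

/-- The history function of the single step starting at position `j` of the run. -/
def stepHist (R : Run D) (j : ℕ) : List ℕ → List ℕ :=
  match topLeaf? n (R.cfg j).2 with
  | none => id
  | some γ =>
      match D.δ (R.cfg j).1 γ with
      | Trans.read _ => id
      | Trans.op _ o => histStep n o (R.cfg j).2

/-- `histTo R i j p` : the address in `R(i)` of the origin (history) of the substack
of `R(j)` sitting at address `p` (meaningful for `i ≤ j ≤ R.len`). -/
def histTo (R : Run D) (i : ℕ) : ℕ → List ℕ → List ℕ
  | 0, p => p
  | j + 1, p => if j + 1 ≤ i then p else histTo R i j (stepHist R j p)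

/-- A run is `k`-upper when the topmost `k`-stack at its end originates from
the topmost `k`-stack at its start. -/
def IsUpper (R : Run D) (k : ℕ) : Prop :=
  histTo R 0 R.len (topAddr (R.cfg R.len).2 (n - k)) = topAddr (R.cfg 0).2 (n - k)

/-- A run is a `k`-return when the topmost `(k-1)`-stack at its end originates from the
topmost `(k-1)`-stack of `pop^k` of its starting stack, and no suffix is `(k-1)`-upper. -/
def IsReturn (R : Run D) (k : ℕ) : Prop :=
  (histTo R 0 R.len (topAddr (R.cfg R.len).2 (n - (k - 1))) =
    topAddr (R.cfg 0).2 (n - k) ++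
      [sizeAt (R.cfg 0).2 (topAddr (R.cfg 0).2 (n - k)) - 2]) ∧
  ∀ i < R.len, ¬ (R.sub i R.len).IsUpper (k - 1)

end Run

/-- `R` is the composition `S ∘ T` of the runs `S` and `T`. -/
def IsComp {n : ℕ} {A Γ : Type} {D : DPDA n A Γ} (R S T : Run D) : Prop :=
  S.cfg S.len = T.cfg 0 ∧ R.len = S.len + T.len ∧
  (∀ i ≤ S.len, R.cfg i = S.cfg i) ∧ (∀ i < S.len, R.lab i = S.lab i) ∧
  (∀ i ≤ T.len, R.cfg (S.len + i) = T.cfg i) ∧ (∀ i < T.len, R.lab (S.len + i) = T.lab i)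

/-- `Decomp R k r c` : `c 0 < c 1 < … < c r` are the cut points of the (unique)
decomposition of the `k`-upper run `R` into the maximal number of nonempty
`k`-upper runs. -/
def Decomp {n : ℕ} {A Γ : Type} {D : DPDA n A Γ} (R : Run D) (k r : ℕ) (c : ℕ → ℕ) : Prop :=
  c 0 = 0 ∧ c r = R.len ∧ (∀ j < r, c j < c (j + 1)) ∧ (∀ j ≤ r, c j ≤ R.len) ∧
  (∀ j < r, (R.sub (c j) (c (j + 1))).IsUpper k) ∧
  (∀ j < r, ∀ i, c j < i → i < c (j + 1) → ¬ (R.sub i (c (j + 1))).IsUpper k)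

/-- The image under the morphism generated by `φ` of a word. -/
def phiW {A M : Type} [Monoid M] (φ : A → M) (w : List A) : M := (w.map φ).prod

/-- The two `k`-upper runs `R` and `S` are `(k,φ)`-parallel. -/
def Parallel {n : ℕ} {A Γ M : Type} [Monoid M] {D : DPDA n A Γ}
    (φ : A → M) (R S : Run D) (k : ℕ) : Prop :=
  R.IsUpper k ∧ S.IsUpper k ∧
  topStk n (R.cfg R.len).2 k = topStk n (S.cfg S.len).2 k ∧
  ∃ (r : ℕ) (cR cS : ℕ → ℕ), Decomp R k r cR ∧ Decomp S k r cS ∧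
    ∀ j < r,
      phiW φ (R.sub (cR j) (cR (j + 1))).word = phiW φ (S.sub (cS j) (cS (j + 1))).word ∧
      topStk n (R.cfg (cR j)).2 k = topStk n (S.cfg (cS j)).2 k

/-- An infinite run of an `n`-DPDA. -/
structure InfRun {n : ℕ} {A Γ : Type} (D : DPDA n A Γ) where
  cfg : ℕ → D.Q × St Γ
  lab : ℕ → Option A
  ok : ∀ i, Step D (cfg i) (lab i) (cfg (i + 1))

/-- The finite subrun `R[i,j]` of an infinite run. -/
def InfRun.sub {n : ℕ} {A Γ : Type} {D : DPDA n A Γ} (R : InfRun D) (i j : ℕ) : Run D where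
  len := j - i
  cfg := fun t => R.cfg (i + t)
  lab := fun t => R.lab (i + t)
  ok := fun t _ => R.ok (i + t)

/-- A step label reads nothing, or reads the `star` symbol. -/
def OnlyStar {A : Type} (star : A) (o : Option A) : Prop := o = none ∨ o = some star

/-- Milestone configurations. -/
def Milestone {n : ℕ} {A Γ : Type} {D : DPDA n A Γ} (star : A) (c : D.Q × St Γ) : Prop :=
  ∃ R : InfRun D, R.cfg 0 = c ∧ (∀ i, OnlyStar star (R.lab i)) ∧
    ∃ I : Set ℕ, I.Infinite ∧ 0 ∈ I ∧ ∀ i ∈ I, ∀ j ∈ I, i ≤ j → (R.sub i j).IsUpper 0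

/-- The initial order-`n` stack, containing the single symbol `γ`. -/
def initStack (n : ℕ) {Γ : Type} (γ : Γ) : St Γ :=
  Nat.rec (motive := fun _ => St Γ) (St.leaf γ) (fun _ s => St.node [s]) n

def initCfg {n : ℕ} {A Γ : Type} (D : DPDA n A Γ) : D.Q × St Γ := (D.qI, initStack n D.γI)

/-- The language recognized by an `n`-DPDA. -/
def Lang {n : ℕ} {A Γ : Type} (D : DPDA n A Γ) : Set (List A) :=
  { w | ∃ R : Run D, R.cfg 0 = initCfg D ∧ R.word = w ∧ (R.cfg R.len).1 ∈ D.F }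

/-! ### Deterministic order-2 collapsible pushdown automata -/

/-- Stack operations of an order-2 collapsible pushdown automaton. -/
inductive COp (Γ : Type) where
  | pop1
  | pop2
  | push1 (γ : Γ)
  | push2 (γ : Γ)
  | collapse

/-- An order-2 collapsible stack: a list of 1-stacks (topmost first), each a list of
0-stacks (topmost first) storing a symbol and the collapse link (a natural number). -/
abbrev CStk (Γ : Type) := List (List (Γ × ℕ))

/-- Semantics of the order-2 collapsible stack operations. -/
def capply {Γ : Type} : COp Γ → CStk Γ → Option (CStk Γ)
  | COp.pop1, (_ :: x :: t) :: rest => some ((x :: t) :: rest)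
  | COp.pop1, _ => none
  | COp.pop2, _ :: s :: rest => some (s :: rest)
  | COp.pop2, _ => none
  | COp.push1 γ, (x :: t) :: rest => some (((γ, rest.length + 1) :: x :: t) :: rest)
  | COp.push1 _, _ => none
  | COp.push2 γ, ((x, m) :: t) :: rest => some (((γ, m) :: t) :: ((x, m) :: t) :: rest)
  | COp.push2 _, _ => none
  | COp.collapse, ((x, m) :: t) :: rest =>
      if 1 ≤ m - 1 ∧ m - 1 ≤ rest.length + 1 then
        some ((((x, m) :: t) :: rest).drop (rest.length + 1 - (m - 1)))
      else none
  | COp.collapse, _ => none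

/-- The topmost stack symbol of an order-2 collapsible stack. -/
def ctop? {Γ : Type} : CStk Γ → Option Γ
  | ((γ, _) :: _) :: _ => some γ
  | _ => none

inductive CTrans (A Γ Q : Type) where
  | read (f : A → Q)
  | op (q : Q) (o : COp Γ)

/-- A deterministic order-2 collapsible pushdown automaton. -/
structure CPDA2 (A Γ : Type) where
  Q : Type
  finQ : Finite Q
  qI : Q
  γI : Γ
  F : Set Q
  δ : Q → Γ → CTrans A Γ Q
  read_inj : ∀ q γ f, δ q γ = CTrans.read f → Function.Injective f

inductive CStep {A Γ : Type} (D : CPDA2 A Γ) :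
    D.Q × CStk Γ → Option A → D.Q × CStk Γ → Prop where
  | read {q : D.Q} {s : CStk Γ} {γ : Γ} {f : A → D.Q} (a : A) :
      ctop? s = some γ → D.δ q γ = CTrans.read f → CStep D (q, s) (some a) (f a, s)
  | op {q : D.Q} {s s' : CStk Γ} {γ : Γ} {q' : D.Q} {o : COp Γ} :
      ctop? s = some γ → D.δ q γ = CTrans.op q' o → capply o s = some s' →
      CStep D (q, s) none (q', s')

structure CRun {A Γ : Type} (D : CPDA2 A Γ) where
  len : ℕ
  cfg : ℕ → D.Q × CStk Γ
  lab : ℕ → Option A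
  ok : ∀ i < len, CStep D (cfg i) (lab i) (cfg (i + 1))

def CRun.word {A Γ : Type} {D : CPDA2 A Γ} (R : CRun D) : List A :=
  (List.range R.len).filterMap R.lab

def cinitCfg {A Γ : Type} (D : CPDA2 A Γ) : D.Q × CStk Γ := (D.qI, [[(D.γI, 1)]])

/-- The language recognized by a 2-DCPDA. -/
def CLang {A Γ : Type} (D : CPDA2 A Γ) : Set (List A) :=
  { w | ∃ R : CRun D, R.cfg 0 = cinitCfg D ∧ R.word = w ∧ (R.cfg R.len).1 ∈ D.F }

/-! ### The alphabet `{[, ], ⋆, ♯}`, the function `stars`, and the language `U` -/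

inductive Alph : Type where
  | lb    -- the opening bracket [
  | rb    -- the closing bracket ]
  | star  -- ⋆
  | sharp -- ♯
  deriving DecidableEq

instance instFintypeAlph : Fintype Alph :=
  ⟨{Alph.lb, Alph.rb, Alph.star, Alph.sharp}, fun x => by cases x <;> simp⟩

/-- Processes a word over `{[, ], ⋆}`, keeping the total number of stars read so far and,
for each currently unmatched opening bracket (most recent first), the number of stars
read before it; returns `none` iff some prefix has more `]` than `[`. -/
def starsAux : List Alph → ℕ → List ℕ → Option (List ℕ)
  | [], _, st => some st
  | Alph.star :: w, cnt, st => starsAux w (cnt + 1) st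
  | Alph.lb :: w, cnt, st => starsAux w cnt (cnt :: st)
  | Alph.rb :: w, cnt, st =>
      match st with
      | [] => none
      | _ :: st' => starsAux w cnt st'
  | Alph.sharp :: _, _, _ => none

/-- `stars w` : `0` if some prefix of `w` has more closing than opening brackets, or if
`w` has equally many opening and closing brackets; otherwise the number of `⋆`s in `w`
before the last opening bracket of `w` not matched by a closing bracket. -/
def stars (w : List Alph) : ℕ :=
  match starsAux w 0 [] with
  | some (c :: _) => c
  | _ => 0

/-- The language `U = { w ♯^(stars(w)+1) | w ∈ {[, ], ⋆}* }`. -/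
def U : Set (List Alph) :=
  { u | ∃ w : List Alph, Alph.sharp ∉ w ∧ u = w ++ List.replicate (stars w + 1) Alph.sharp }

/-! ### Tree-generating pushdown systems -/

inductive TTrans (A Γ Q : Type) where
  | branch (a : A) (next : ℕ → Q)
  | op (q : Q) (o : Op Γ)

/-- A deterministic tree-generating order-`n` pushdown system (without collapse)
over the ranked alphabet `(A, rank)`. -/
structure TreePDA (n : ℕ) (A Γ : Type) (rank : A → ℕ) where
  Q : Type
  finQ : Finite Q
  qI : Q
  γI : Γ
  δ : Q → Γ → TTrans A Γ Q
  branch_inj : ∀ q γ a next, δ q γ = TTrans.branch a next →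
      ∀ i j, i < rank a → j < rank a → next i = next j → i = j

/-- One step of a tree-generating `n`-PDS; the label records the child chosen
at a branch step (if any). -/
inductive TStep {n : ℕ} {A Γ : Type} {rank : A → ℕ} (D : TreePDA n A Γ rank) :
    D.Q × St Γ → Option ℕ → D.Q × St Γ → Prop where
  | branch {q : D.Q} {s : St Γ} {γ : Γ} {a : A} {next : ℕ → D.Q} {i : ℕ} :
      IsValid n s → topLeaf? n s = some γ → D.δ q γ = TTrans.branch a next → i < rank a →
      TStep D (q, s) (some i) (next i, s)
  | op {q : D.Q} {s s' : St Γ} {γ : Γ} {q' : D.Q} {o : Op Γ} :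
      IsValid n s → topLeaf? n s = some γ → D.δ q γ = TTrans.op q' o →
      applyOp n o s = some s' →
      TStep D (q, s) none (q', s')

def TReach {n : ℕ} {A Γ : Type} {rank : A → ℕ} (D : TreePDA n A Γ rank) :
    D.Q × St Γ → D.Q × St Γ → Prop :=
  Relation.ReflTransGen (fun c c' => ∃ o, TStep D c o c')

def TOpReach {n : ℕ} {A Γ : Type} {rank : A → ℕ} (D : TreePDA n A Γ rank) :
    D.Q × St Γ → D.Q × St Γ → Prop :=
  Relation.ReflTransGen (fun c c' => TStep D c none c')

/-- `c` is a configuration at which a `branch(a,…)` transition applies. -/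
def TIsBr {n : ℕ} {A Γ : Type} {rank : A → ℕ} (D : TreePDA n A Γ rank)
    (c : D.Q × St Γ) (a : A) : Prop :=
  ∃ γ next, IsValid n c.2 ∧ topLeaf? n c.2 = some γ ∧ D.δ c.1 γ = TTrans.branch a next

/-- `TFollow D c p c'` : starting from the branch configuration `c` and following
the child choices `p` (each branch step being followed by op steps up to the next
branch configuration) one arrives at the branch configuration `c'`. -/
inductive TFollow {n : ℕ} {A Γ : Type} {rank : A → ℕ} (D : TreePDA n A Γ rank) :
    D.Q × St Γ → List ℕ → D.Q × St Γ → Prop where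
  | nil (c : D.Q × St Γ) : TFollow D c [] c
  | cons {c c₁ c₂ c₃ : D.Q × St Γ} {i : ℕ} {p : List ℕ} :
      TStep D c (some i) c₁ → TOpReach D c₁ c₂ → (∃ a, TIsBr D c₂ a) →
      TFollow D c₂ p c₃ → TFollow D c (i :: p) c₃

def tinitCfg {n : ℕ} {A Γ : Type} {rank : A → ℕ} (D : TreePDA n A Γ rank) : D.Q × St Γ :=
  (D.qI, initStack n D.γI)

/-- `D` generates the ranked tree whose labelling function is `t`
(`t p = some a` iff the node at position `p` exists and is labelled `a`). -/
def TGenerates {n : ℕ} {A Γ : Type} {rank : A → ℕ} (D : TreePDA n A Γ rank)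
    (t : List ℕ → Option A) : Prop :=
  (∀ c, TReach D (tinitCfg D) c → ∃ c' a, TReach D c c' ∧ TIsBr D c' a) ∧
  ∃ c₀, TOpReach D (tinitCfg D) c₀ ∧ (∃ a, TIsBr D c₀ a) ∧
    ∀ p a, t p = some a ↔ ∃ c, TFollow D c₀ p c ∧ TIsBr D c a

/-! ### Tree-generating order-2 collapsible pushdown systems -/

inductive CTTrans (A Γ Q : Type) where
  | branch (a : A) (next : ℕ → Q)
  | op (q : Q) (o : COp Γ)

structure CTreePDA (A Γ : Type) (rank : A → ℕ) where
  Q : Type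
  finQ : Finite Q
  qI : Q
  γI : Γ
  δ : Q → Γ → CTTrans A Γ Q
  branch_inj : ∀ q γ a next, δ q γ = CTTrans.branch a next →
      ∀ i j, i < rank a → j < rank a → next i = next j → i = j

inductive CTStep {A Γ : Type} {rank : A → ℕ} (D : CTreePDA A Γ rank) :
    D.Q × CStk Γ → Option ℕ → D.Q × CStk Γ → Prop where
  | branch {q : D.Q} {s : CStk Γ} {γ : Γ} {a : A} {next : ℕ → D.Q} {i : ℕ} :
      ctop? s = some γ → D.δ q γ = CTTrans.branch a next → i < rank a →
      CTStep D (q, s) (some i) (next i, s)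
  | op {q : D.Q} {s s' : CStk Γ} {γ : Γ} {q' : D.Q} {o : COp Γ} :
      ctop? s = some γ → D.δ q γ = CTTrans.op q' o → capply o s = some s' →
      CTStep D (q, s) none (q', s')

def CTReach {A Γ : Type} {rank : A → ℕ} (D : CTreePDA A Γ rank) :
    D.Q × CStk Γ → D.Q × CStk Γ → Prop :=
  Relation.ReflTransGen (fun c c' => ∃ o, CTStep D c o c')

def CTOpReach {A Γ : Type} {rank : A → ℕ} (D : CTreePDA A Γ rank) :
    D.Q × CStk Γ → D.Q × CStk Γ → Prop :=
  Relation.ReflTransGen (fun c c' => CTStep D c none c')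

def CTIsBr {A Γ : Type} {rank : A → ℕ} (D : CTreePDA A Γ rank)
    (c : D.Q × CStk Γ) (a : A) : Prop :=
  ∃ γ next, ctop? c.2 = some γ ∧ D.δ c.1 γ = CTTrans.branch a next

inductive CTFollow {A Γ : Type} {rank : A → ℕ} (D : CTreePDA A Γ rank) :
    D.Q × CStk Γ → List ℕ → D.Q × CStk Γ → Prop where
  | nil (c : D.Q × CStk Γ) : CTFollow D c [] c
  | cons {c c₁ c₂ c₃ : D.Q × CStk Γ} {i : ℕ} {p : List ℕ} :
      CTStep D c (some i) c₁ → CTOpReach D c₁ c₂ → (∃ a, CTIsBr D c₂ a) →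
      CTFollow D c₂ p c₃ → CTFollow D c (i :: p) c₃

def ctinitCfg {A Γ : Type} {rank : A → ℕ} (D : CTreePDA A Γ rank) : D.Q × CStk Γ :=
  (D.qI, [[(D.γI, 1)]])

/-- The order-2 collapsible pushdown system `D` generates the ranked tree whose
labelling function is `t`. -/
def CTGenerates {A Γ : Type} {rank : A → ℕ} (D : CTreePDA A Γ rank)
    (t : List ℕ → Option A) : Prop :=
  (∀ c, CTReach D (ctinitCfg D) c → ∃ c' a, CTReach D c c' ∧ CTIsBr D c' a) ∧
  ∃ c₀, CTOpReach D (ctinitCfg D) c₀ ∧ (∃ a, CTIsBr D c₀ a) ∧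
    ∀ p a, t p = some a ↔ ∃ c, CTFollow D c₀ p c ∧ CTIsBr D c a

/-! ### Proof of Statement 2: construction of the automaton -/

section Statement2Proof

/-- Stack alphabet: `bot` sits only in the bottommost 1-stack, `e` marks the bottom of the
live (topmost) 1-stack, `b` is a marker for an unmatched opening bracket, `j` tops junk
1-stacks (the number of junk 1-stacks counts the stars read so far). -/
inductive Sym : Type where
  | bot | e | b | j
  deriving DecidableEq

instance instFintypeSym : Fintype Sym :=
  ⟨{Sym.bot, Sym.e, Sym.b, Sym.j}, fun x => by cases x <;> simp⟩

/-- States of the automaton. -/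
inductive MQ : Type where
  | qI | q0 | q1 | qF | qInv
  | pS1 | pS2 | pS3 | pO | pC | pColl | p1
  | r1 | r2 | r3
  | d0 | d1 | d2 | d3
  deriving DecidableEq

instance instFintypeMQ : Fintype MQ :=
  ⟨{MQ.qI, MQ.q0, MQ.q1, MQ.qF, MQ.qInv, MQ.pS1, MQ.pS2, MQ.pS3, MQ.pO, MQ.pC, MQ.pColl,
    MQ.p1, MQ.r1, MQ.r2, MQ.r3, MQ.d0, MQ.d1, MQ.d2, MQ.d3}, fun x => by cases x <;> simp⟩

open MQ

/-- An (injective) map sending every letter into a dead state. -/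
def deadF : Alph → MQ
  | Alph.lb => d0 | Alph.rb => d1 | Alph.star => d2 | Alph.sharp => d3

/-- The transition function. -/
def dlt : MQ → Sym → CTrans Alph Sym MQ
  | qI, _ => .op q0 (.push2 .e)
  | q0, .e => .read (fun a => match a with
      | Alph.star => pS1 | Alph.lb => pO | Alph.rb => qInv | Alph.sharp => qF)
  | q0, .b => .read (fun a => match a with
      | Alph.star => pS1 | Alph.lb => pO | Alph.rb => pC | Alph.sharp => pColl)
  | q0, _ => .read deadF
  | pS1, _ => .op pS2 (.push1 .j)
  | pS2, _ => .op pS3 (.push2 .j)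
  | pS3, _ => .op q0 .pop1
  | pO, _ => .op q0 (.push1 .b)
  | pC, _ => .op q0 .pop1
  | pColl, _ => .op q1 .collapse
  | q1, .j => .read (fun a => match a with
      | Alph.star => d2 | Alph.lb => d0 | Alph.rb => d1 | Alph.sharp => p1)
  | q1, .bot => .op qF (.push1 .j)
  | q1, _ => .read deadF
  | p1, _ => .op q1 .pop2
  | qInv, _ => .read (fun a => match a with
      | Alph.star => r1 | Alph.lb => r2 | Alph.rb => r3 | Alph.sharp => qF)
  | r1, _ => .op qInv (.push1 .j)
  | r2, _ => .op qInv (.push1 .j)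
  | r3, _ => .op qInv (.push1 .j)
  | qF, _ => .read deadF
  | d0, _ => .read deadF
  | d1, _ => .read deadF
  | d2, _ => .read deadF
  | d3, _ => .read deadF

/-- The 2-DCPDA recognizing `U`. -/
def M : CPDA2 Alph Sym where
  Q := MQ
  finQ := inferInstance
  qI := qI
  γI := Sym.bot
  F := {qF}
  δ := dlt
  read_inj := by
    intro q γ f h
    cases q <;> cases γ <;> simp only [dlt] at h <;> first
      | (injection h with h; subst h; decide)
      | cases h

@[simp] lemma M_δ : M.δ = dlt := rfl

/-! #### Stack descriptions -/

/-- The bottommost 1-stack. -/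
def bstk : List (Sym × ℕ) := [(Sym.bot, 1)]

/-- The live topmost 1-stack: one `b` per unmatched opening bracket, with collapse
link `c + 2` where `c` is the number of stars read before that bracket. -/
def Tstk : List ℕ → List (Sym × ℕ)
  | [] => [(Sym.e, 1)]
  | c :: st => (Sym.b, c + 2) :: Tstk st

/-- A junk 1-stack: topped by the symbol `j`. -/
def IsJunk (s : List (Sym × ℕ)) : Prop := ∃ n t, s = (Sym.j, n) :: t

/-- The whole 2-stack in reading mode. -/
def Stk (st : List ℕ) (junk : CStk Sym) : CStk Sym := Tstk st :: junk ++ [bstk]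

/-- A `proc`essing function mirroring `starsAux` but also returning the star count. -/
def proc : List Alph → ℕ → List ℕ → Option (ℕ × List ℕ)
  | [], cnt, st => some (cnt, st)
  | Alph.star :: w, cnt, st => proc w (cnt + 1) st
  | Alph.lb :: w, cnt, st => proc w cnt (cnt :: st)
  | Alph.rb :: w, cnt, st =>
      match st with
      | [] => none
      | _ :: st' => proc w cnt st'
  | Alph.sharp :: _, _, _ => none

lemma proc_spec (w : List Alph) :
    ∀ cnt st, starsAux w cnt st = (proc w cnt st).map Prod.snd := by
  induction w with
  | nil => intros; rfl
  | cons a w ih => intro cnt st; cases a <;> cases st <;> simp [starsAux, proc, ih]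

lemma proc_append (w v : List Alph) :
    ∀ cnt st, proc (w ++ v) cnt st = (proc w cnt st).bind fun p => proc v p.1 p.2 := by
  induction w with
  | nil => intros; rfl
  | cons a w ih => intro cnt st; cases a <;> cases st <;> simp [proc, ih]

lemma proc_bound (w : List Alph) : ∀ cnt st cnt' st', proc w cnt st = some (cnt', st') →
    (∀ x ∈ st, x ≤ cnt) → cnt ≤ cnt' ∧ ∀ x ∈ st', x ≤ cnt' := by
  induction w with
  | nil => intro cnt st cnt' st' h hb; simp [proc] at h; obtain ⟨rfl, rfl⟩ := h; exact ⟨le_rfl, hb⟩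
  | cons a w ih =>
    intro cnt st cnt' st' h hb
    cases a with
    | star =>
        have := ih (cnt+1) st cnt' st' h (fun x hx => le_trans (hb x hx) (by omega))
        exact ⟨by omega, this.2⟩
    | lb =>
        have := ih cnt (cnt :: st) cnt' st' h ?_
        · exact this
        · intro x hx; rcases List.mem_cons.1 hx with rfl | hx
          · exact le_rfl
          · exact hb x hx
    | rb =>
        cases st with
        | nil => simp [proc] at h
        | cons c0 st2 =>
            exact ih cnt st2 cnt' st' h (fun x hx => hb x (List.mem_cons_of_mem _ hx))
    | sharp => simp [proc] at h

lemma stars_of_proc_cons {w : List Alph} {cnt c0 : ℕ} {st : List ℕ}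
    (h : proc w 0 [] = some (cnt, c0 :: st)) : stars w = c0 := by
  unfold stars; rw [proc_spec, h]; rfl

lemma stars_of_proc_nil {w : List Alph} {cnt : ℕ}
    (h : proc w 0 [] = some (cnt, [])) : stars w = 0 := by
  unfold stars; rw [proc_spec, h]; rfl

lemma stars_of_proc_none {w : List Alph} (h : proc w 0 [] = none) : stars w = 0 := by
  unfold stars; rw [proc_spec, h]; rfl

/-! #### A reachability relation, and its equivalence with runs -/

inductive Reach : MQ × CStk Sym → List Alph → MQ × CStk Sym → Prop where
  | refl (c) : Reach c [] c
  | stepE {c c₁ c₂ u} : CStep M c none c₁ → Reach c₁ u c₂ → Reach c u c₂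
  | stepR {c c₁ c₂ u a} : CStep M c (some a) c₁ → Reach c₁ u c₂ → Reach c (a :: u) c₂

lemma Reach.trans {c₁ c₂ c₃ u v} (h1 : Reach c₁ u c₂) (h2 : Reach c₂ v c₃) :
    Reach c₁ (u ++ v) c₃ := by
  induction h1 with
  | refl => exact h2
  | stepE hs _ ih => exact .stepE hs (ih h2)
  | stepR hs _ ih => exact .stepR hs (ih h2)

lemma filterMap_range_succ {α : Type*} (f : ℕ → Option α) (n : ℕ) :
    (List.range (n+1)).filterMap f = (f 0).toList ++ (List.range n).filterMap (fun i => f (i+1)) := by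
  rw [List.range_succ_eq_map, List.filterMap_cons, List.filterMap_map]
  cases h : f 0 <;> simp [h, Function.comp_def, Nat.succ_eq_add_one]

lemma reach_of_run : ∀ (n : ℕ) (R : CRun M), R.len = n → Reach (R.cfg 0) R.word (R.cfg R.len) := by
  intro n
  induction n with
  | zero => intro R h; rw [show R.word = [] by simp [CRun.word, h], h]; exact .refl _
  | succ n ih =>
      intro R h
      have hstep := R.ok 0 (by omega)
      let R' : CRun M := ⟨n, fun i => R.cfg (i+1), fun i => R.lab (i+1),
        fun i hi => R.ok (i+1) (by omega)⟩
      have hr' : Reach (R.cfg 1) R'.word (R.cfg R.len) := by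
        have := ih R' rfl
        simpa [R', h] using this
      have hw : R.word = (R.lab 0).toList ++ R'.word := by
        simp only [CRun.word, h, R']
        exact filterMap_range_succ R.lab n
      rw [hw]
      cases hl : R.lab 0 with
      | none => rw [hl] at hstep; simpa using Reach.stepE hstep hr'
      | some a => rw [hl] at hstep; simpa using Reach.stepR hstep hr'

def consRun (c : MQ × CStk Sym) (o : Option Alph) (R : CRun M)
    (hs : CStep M c o (R.cfg 0)) : CRun M where
  len := R.len + 1
  cfg := fun i => match i with | 0 => c | i+1 => R.cfg i
  lab := fun i => match i with | 0 => o | i+1 => R.lab i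
  ok := by
    intro i hi
    match i with
    | 0 => exact hs
    | i + 1 => exact R.ok i (by omega)

lemma consRun_word (c o) (R : CRun M) (hs : CStep M c o (R.cfg 0)) :
    (consRun c o R hs).word = o.toList ++ R.word := by
  simp only [CRun.word, consRun]
  exact filterMap_range_succ _ R.len

lemma run_of_reach {c u c'} (h : Reach c u c') :
    ∃ R : CRun M, R.cfg 0 = c ∧ R.word = u ∧ R.cfg R.len = c' := by
  induction h with
  | refl c => exact ⟨⟨0, fun _ => c, fun _ => none, fun i hi => by omega⟩, rfl, by simp [CRun.word], rfl⟩
  | stepE hs _ ih =>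
      obtain ⟨R, h0, hw, he⟩ := ih
      refine ⟨consRun _ none R (h0 ▸ hs), rfl, ?_, he⟩
      rw [consRun_word]; simpa using hw
  | stepR hs _ ih =>
      obtain ⟨R, h0, hw, he⟩ := ih
      refine ⟨consRun _ (some _) R (h0 ▸ hs), rfl, ?_, he⟩
      rw [consRun_word]; simpa using hw

lemma mem_CLang_iff {u : List Alph} :
    u ∈ CLang M ↔ ∃ c, Reach (cinitCfg M) u c ∧ c.1 ∈ M.F := by
  constructor
  · rintro ⟨R, h0, hw, hF⟩
    exact ⟨R.cfg R.len, by rw [← h0, ← hw]; exact reach_of_run R.len R rfl, hF⟩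
  · rintro ⟨c, hr, hF⟩
    obtain ⟨R, h0, hw, he⟩ := run_of_reach hr
    exact ⟨R, h0, hw, he ▸ hF⟩

/-! #### Single-step and macro-step lemmas -/

lemma rstepE {q : MQ} {s : CStk Sym} {γ q' o s' c₂ u} (h1 : ctop? s = some γ)
    (h2 : dlt q γ = .op q' o) (h3 : capply o s = some s')
    (h4 : Reach (q', s') u c₂) : Reach (q, s) u c₂ :=
  .stepE (CStep.op h1 h2 h3) h4

lemma rstepR {q : MQ} {s : CStk Sym} {γ f} {a : Alph} {c₂ u} (h1 : ctop? s = some γ)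
    (h2 : dlt q γ = .read f) (h4 : Reach (f a, s) u c₂) : Reach (q, s) (a :: u) c₂ :=
  .stepR (CStep.read a h1 h2) h4

lemma capply_push1 (γ x t rest) :
    capply (Γ := Sym) (COp.push1 γ) ((x :: t) :: rest) =
      some (((γ, rest.length + 1) :: x :: t) :: rest) := rfl

lemma capply_push2 (γ : Sym) (x m t rest) :
    capply (Γ := Sym) (COp.push2 γ) (((x, m) :: t) :: rest) =
      some (((γ, m) :: t) :: ((x, m) :: t) :: rest) := rfl

lemma capply_pop1 (x y : Sym × ℕ) (t rest) :
    capply (Γ := Sym) COp.pop1 ((x :: y :: t) :: rest) = some ((y :: t) :: rest) := rfl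

lemma capply_pop2 (s t : List (Sym × ℕ)) (rest) :
    capply (Γ := Sym) COp.pop2 (s :: t :: rest) = some (t :: rest) := rfl

lemma capply_collapse (x : Sym) (m t rest) (h1 : 1 ≤ m - 1) (h2 : m - 1 ≤ rest.length + 1) :
    capply (Γ := Sym) COp.collapse (((x, m) :: t) :: rest) =
      some ((((x, m) :: t) :: rest).drop (rest.length + 1 - (m - 1))) := by
  simp [capply, h1, h2]

lemma macro_star {st junk u c₂}
    (h : Reach (MQ.q0, Stk st
        (((Sym.j, (junk ++ [bstk]).length + 1) :: Tstk st) :: junk)) u c₂) :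
    Reach (MQ.q0, Stk st junk) (Alph.star :: u) c₂ := by
  cases st with
  | nil => exact rstepR rfl rfl (rstepE rfl rfl rfl (rstepE rfl rfl rfl (rstepE rfl rfl rfl h)))
  | cons c st' =>
      exact rstepR rfl rfl (rstepE rfl rfl rfl (rstepE rfl rfl rfl (rstepE rfl rfl rfl h)))

lemma macro_open {st junk u c₂}
    (h : Reach (MQ.q0, Stk (junk.length :: st) junk) u c₂) :
    Reach (MQ.q0, Stk st junk) (Alph.lb :: u) c₂ := by
  have hl : capply (Γ := Sym) (COp.push1 Sym.b) (Stk st junk) =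
      some (Stk (junk.length :: st) junk) := by
    cases st <;> simp [Stk, Tstk, capply_push1]
  cases st with
  | nil => exact rstepR rfl rfl (rstepE rfl rfl hl h)
  | cons c st' => exact rstepR rfl rfl (rstepE rfl rfl hl h)

lemma macro_close {c0 st junk u c₂}
    (h : Reach (MQ.q0, Stk st junk) u c₂) :
    Reach (MQ.q0, Stk (c0 :: st) junk) (Alph.rb :: u) c₂ := by
  cases st with
  | nil => exact rstepR rfl rfl (rstepE rfl rfl rfl h)
  | cons c st' => exact rstepR rfl rfl (rstepE rfl rfl rfl h)

lemma macro_close_inv {junk u c₂} (h : Reach (MQ.qInv, Stk [] junk) u c₂) :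
    Reach (MQ.q0, Stk [] junk) (Alph.rb :: u) c₂ :=
  rstepR rfl rfl h

lemma macro_inv_step {γ : Sym} {n t rest u c₂} {a : Alph} (ha : a ≠ Alph.sharp)
    (h : Reach (MQ.qInv, ((Sym.j, rest.length + 1) :: (γ, n) :: t) :: rest) u c₂) :
    Reach (MQ.qInv, ((γ, n) :: t) :: rest) (a :: u) c₂ := by
  cases a with
  | sharp => exact absurd rfl ha
  | star => exact rstepR rfl rfl (rstepE rfl rfl rfl h)
  | lb => exact rstepR rfl rfl (rstepE rfl rfl rfl h)
  | rb => exact rstepR rfl rfl (rstepE rfl rfl rfl h)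

lemma macro_inv_accept : ∀ (w : List Alph), Alph.sharp ∉ w → ∀ (γ : Sym) (n : ℕ) t rest,
    ∃ c', Reach (MQ.qInv, ((γ, n) :: t) :: rest) (w ++ [Alph.sharp]) c' ∧ c'.1 = MQ.qF := by
  intro w
  induction w with
  | nil =>
      intro _ γ n t rest
      exact ⟨(MQ.qF, ((γ, n) :: t) :: rest), rstepR rfl rfl (.refl _), rfl⟩
  | cons a w ih =>
      intro hs γ n t rest
      have ha : a ≠ Alph.sharp := fun h => hs (h ▸ (List.mem_cons_self : a ∈ a :: w))
      obtain ⟨c', hr, hF⟩ := ih (fun h => hs (List.mem_cons_of_mem _ h))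
        Sym.j (rest.length + 1) ((γ, n) :: t) rest
      exact ⟨c', macro_inv_step ha hr, hF⟩

lemma macro_q1 : ∀ (jl : CStk Sym), (∀ s ∈ jl, IsJunk s) →
    ∃ S', Reach (MQ.q1, jl ++ [bstk]) (List.replicate jl.length Alph.sharp) (MQ.qF, S') := by
  intro jl
  induction jl with
  | nil => exact fun _ => ⟨_, rstepE rfl rfl rfl (.refl _)⟩
  | cons s jl ih =>
      intro hj
      obtain ⟨n, t, rfl⟩ := hj s (List.mem_cons_self)
      obtain ⟨S', h⟩ := ih (fun x hx => hj x (List.mem_cons_of_mem _ hx))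
      refine ⟨S', ?_⟩
      rw [List.length_cons, List.replicate_succ]
      refine rstepR rfl rfl (rstepE rfl rfl ?_ h)
      cases jl with
      | nil => exact capply_pop2 _ _ _
      | cons s2 jl2 => exact capply_pop2 _ _ _

lemma macro_sharp_collapse {c0 st junk u c₂} (hle : c0 ≤ junk.length)
    (h : Reach (MQ.q1, junk.drop (junk.length - c0) ++ [bstk]) u c₂) :
    Reach (MQ.q0, Stk (c0 :: st) junk) (Alph.sharp :: u) c₂ := by
  refine rstepR rfl rfl (rstepE rfl rfl ?_ h)
  show capply COp.collapse (((Sym.b, c0 + 2) :: Tstk st) :: (junk ++ [bstk])) = _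
  rw [capply_collapse _ _ _ _ (by omega) (by simp; omega)]
  have e1 : (junk ++ [bstk]).length + 1 - (c0 + 2 - 1) = (junk.length - c0) + 1 := by
    simp; omega
  rw [e1, List.drop_succ_cons, List.drop_append_of_le_length (by omega)]

lemma macro_sharp_e {junk} :
    Reach (MQ.q0, Stk [] junk) [Alph.sharp] (MQ.qF, Stk [] junk) :=
  rstepR rfl rfl (.refl _)

/-! #### The forward simulation -/

lemma forward_some : ∀ (w : List Alph) (st : List ℕ) (junk : CStk Sym) (cnt' : ℕ)
    (st' : List ℕ), Alph.sharp ∉ w → proc w junk.length st = some (cnt', st') →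
    (∀ s ∈ junk, IsJunk s) →
    ∃ junk', junk'.length = cnt' ∧ (∀ s ∈ junk', IsJunk s) ∧
      Reach (MQ.q0, Stk st junk) w (MQ.q0, Stk st' junk') := by
  intro w
  induction w with
  | nil =>
      intro st junk cnt' st' _ hp hj
      simp [proc] at hp
      obtain ⟨rfl, rfl⟩ := hp
      exact ⟨junk, rfl, hj, .refl _⟩
  | cons a w ih =>
      intro st junk cnt' st' hs hp hj
      have hs' : Alph.sharp ∉ w := fun h => hs (List.mem_cons_of_mem _ h)
      cases a with
      | star =>
          have hp' : proc w ((((Sym.j, (junk ++ [bstk]).length + 1) :: Tstk st) :: junk).length)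
              st = some (cnt', st') := by
            simpa [proc] using hp
          obtain ⟨junk', h1, h2, h3⟩ := ih st _ cnt' st' hs' hp'
            (by rintro x hx
                rcases List.mem_cons.1 hx with rfl | hx
                · exact ⟨_, _, rfl⟩
                · exact hj x hx)
          exact ⟨junk', h1, h2, macro_star h3⟩
      | lb =>
          obtain ⟨junk', h1, h2, h3⟩ := ih (junk.length :: st) junk cnt' st' hs'
            (by simpa [proc] using hp) hj
          exact ⟨junk', h1, h2, macro_open h3⟩
      | rb =>
          cases st with
          | nil => simp [proc] at hp
          | cons c0 st2 =>
              obtain ⟨junk', h1, h2, h3⟩ := ih st2 junk cnt' st' hs'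
                (by simpa [proc] using hp) hj
              exact ⟨junk', h1, h2, macro_close h3⟩
      | sharp => exact absurd List.mem_cons_self hs

lemma forward_none : ∀ (w : List Alph) (st : List ℕ) (junk : CStk Sym),
    Alph.sharp ∉ w → proc w junk.length st = none → (∀ s ∈ junk, IsJunk s) →
    ∃ c', Reach (MQ.q0, Stk st junk) (w ++ [Alph.sharp]) c' ∧ c'.1 = MQ.qF := by
  intro w
  induction w with
  | nil => intro st junk _ hp _; simp [proc] at hp
  | cons a w ih =>
      intro st junk hs hp hj
      have hs' : Alph.sharp ∉ w := fun h => hs (List.mem_cons_of_mem _ h)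
      cases a with
      | star =>
          obtain ⟨c', h1, h2⟩ := ih st
            (((Sym.j, (junk ++ [bstk]).length + 1) :: Tstk st) :: junk) hs'
            (by simpa [proc] using hp)
            (by rintro x hx
                rcases List.mem_cons.1 hx with rfl | hx
                · exact ⟨_, _, rfl⟩
                · exact hj x hx)
          exact ⟨c', macro_star h1, h2⟩
      | lb =>
          obtain ⟨c', h1, h2⟩ := ih (junk.length :: st) junk hs' (by simpa [proc] using hp) hj
          exact ⟨c', macro_open h1, h2⟩
      | rb =>
          cases st with
          | nil =>
              obtain ⟨c', h1, h2⟩ := macro_inv_accept w hs' Sym.e 1 [] (junk ++ [bstk])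
              exact ⟨c', macro_close_inv h1, h2⟩
          | cons c0 st2 =>
              obtain ⟨c', h1, h2⟩ := ih st2 junk hs' (by simpa [proc] using hp) hj
              exact ⟨c', macro_close h1, h2⟩
      | sharp => exact absurd List.mem_cons_self hs

lemma U_subset_CLang : U ⊆ CLang M := by
  rintro u ⟨w, hw, rfl⟩
  rw [mem_CLang_iff]
  have hinit : ∀ {u' : List Alph} {c'}, Reach (MQ.q0, Stk [] []) u' c' →
      Reach (cinitCfg M) u' c' := fun h => rstepE rfl rfl rfl h
  cases hp : proc w 0 [] with
  | none =>
      obtain ⟨c', h1, h2⟩ := forward_none w [] [] hw hp (by simp)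
      refine ⟨c', hinit ?_, by exact h2⟩
      rw [stars_of_proc_none hp]
      simpa using h1
  | some p =>
      obtain ⟨cnt', st'⟩ := p
      obtain ⟨junk', hlen, hjj, hr⟩ := forward_some w [] [] cnt' st' hw hp (by simp)
      cases st' with
      | nil =>
          refine ⟨(MQ.qF, Stk [] junk'), hinit ?_, by exact rfl⟩
          rw [stars_of_proc_nil hp]
          simpa using hr.trans macro_sharp_e
      | cons c0 st2 =>
          have hc0 : c0 ≤ junk'.length := by
            have := proc_bound w 0 [] cnt' (c0 :: st2) hp (by simp)
            exact hlen ▸ this.2 c0 List.mem_cons_self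
          obtain ⟨S', hq1⟩ := macro_q1 (junk'.drop (junk'.length - c0))
            (fun x hx => hjj x (List.drop_subset _ _ hx))
          have hlen2 : (junk'.drop (junk'.length - c0)).length = c0 := by
            rw [List.length_drop]; omega
          refine ⟨(MQ.qF, S'), hinit ?_, by exact rfl⟩
          rw [stars_of_proc_cons hp]
          have := hr.trans (macro_sharp_collapse hc0 (hlen2 ▸ hq1))
          simpa [List.replicate_succ] using this

/-! #### The backward direction: a global invariant -/

lemma cstep_inv {q : MQ} {s : CStk Sym} {o c'} (h : CStep M (q, s) o c') :
    ∃ γ, ctop? s = some γ ∧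
      ((∃ f a, dlt q γ = .read f ∧ o = some a ∧ c' = (f a, s)) ∨
       (∃ q' op s', dlt q γ = .op q' op ∧ o = none ∧ capply op s = some s' ∧ c' = (q', s'))) := by
  cases h with
  | read a h1 h2 => exact ⟨_, h1, .inl ⟨_, a, h2, rfl, rfl⟩⟩
  | op h1 h2 h3 => exact ⟨_, h1, .inr ⟨_, _, _, h2, rfl, h3, rfl⟩⟩

def Pw (w : List Alph) (cnt : ℕ) (st : List ℕ) : Prop :=
  Alph.sharp ∉ w ∧ proc w 0 [] = some (cnt, st)

def JQ (junk : CStk Sym) : Prop := ∀ s ∈ junk, IsJunk s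

lemma sharp_notin_snoc {w : List Alph} {a : Alph} (hw : Alph.sharp ∉ w) (ha : a ≠ Alph.sharp) :
    Alph.sharp ∉ w ++ [a] := by
  intro h
  rcases List.mem_append.1 h with h | h
  · exact hw h
  · simp at h; exact ha h.symm

lemma pw_star {w cnt st} (h : Pw w cnt st) : Pw (w ++ [Alph.star]) (cnt + 1) st :=
  ⟨sharp_notin_snoc h.1 (by simp), by rw [proc_append, h.2]; rfl⟩

lemma pw_open {w cnt st} (h : Pw w cnt st) : Pw (w ++ [Alph.lb]) cnt (cnt :: st) :=
  ⟨sharp_notin_snoc h.1 (by simp), by rw [proc_append, h.2]; rfl⟩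

lemma pw_close {w cnt c0 st} (h : Pw w cnt (c0 :: st)) : Pw (w ++ [Alph.rb]) cnt st :=
  ⟨sharp_notin_snoc h.1 (by simp), by rw [proc_append, h.2]; rfl⟩

lemma pw_close_none {w cnt} (h : Pw w cnt []) : proc (w ++ [Alph.rb]) 0 [] = none := by
  rw [proc_append, h.2]; rfl

lemma proc_none_append {w : List Alph} (v) (h : proc w 0 [] = none) :
    proc (w ++ v) 0 [] = none := by
  rw [proc_append, h]; rfl

lemma pw_bound {w cnt c0 st} (h : Pw w cnt (c0 :: st)) : c0 ≤ cnt :=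
  (proc_bound w 0 [] cnt (c0 :: st) h.2 (by simp)).2 c0 List.mem_cons_self

/-- The global invariant: a description of all pairs (word read so far, configuration)
arising in runs of `M` from the initial configuration. -/
inductive GInv : List Alph → MQ × CStk Sym → Prop where
  | init : GInv [] (MQ.qI, [bstk])
  | atQ0 {w st junk} : Pw w junk.length st → JQ junk → GInv w (MQ.q0, Stk st junk)
  | atS1 {w st junk} : Pw w junk.length st → JQ junk →
      GInv (w ++ [Alph.star]) (MQ.pS1, Stk st junk)
  | atS2 {w st junk} (n : ℕ) : Pw w junk.length st → JQ junk →
      GInv (w ++ [Alph.star]) (MQ.pS2, ((Sym.j, n) :: Tstk st) :: (junk ++ [bstk]))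
  | atS3 {w st junk} (n : ℕ) : Pw w junk.length st → JQ junk →
      GInv (w ++ [Alph.star])
        (MQ.pS3, ((Sym.j, n) :: Tstk st) :: ((Sym.j, n) :: Tstk st) :: (junk ++ [bstk]))
  | atO {w st junk} : Pw w junk.length st → JQ junk →
      GInv (w ++ [Alph.lb]) (MQ.pO, Stk st junk)
  | atC {w c0 st junk} : Pw w junk.length (c0 :: st) → JQ junk →
      GInv (w ++ [Alph.rb]) (MQ.pC, Stk (c0 :: st) junk)
  | atColl {w c0 st junk} : Pw w junk.length (c0 :: st) → JQ junk →
      GInv (w ++ [Alph.sharp]) (MQ.pColl, Stk (c0 :: st) junk)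
  | atQ1 {w c0 cnt st jl} : Pw w cnt (c0 :: st) → JQ jl → jl.length ≤ c0 →
      GInv (w ++ List.replicate (1 + (c0 - jl.length)) Alph.sharp) (MQ.q1, jl ++ [bstk])
  | atP1 {w c0 cnt st s jl} : Pw w cnt (c0 :: st) → IsJunk s → JQ jl → jl.length + 1 ≤ c0 →
      GInv (w ++ List.replicate (2 + (c0 - (jl.length + 1))) Alph.sharp)
        (MQ.p1, s :: (jl ++ [bstk]))
  | atInv {w} (γ : Sym) (n : ℕ) (t) (rest : CStk Sym) : Alph.sharp ∉ w →
      proc w 0 [] = none → GInv w (MQ.qInv, ((γ, n) :: t) :: rest)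
  | atR1 {w} (γ : Sym) (n : ℕ) (t) (rest : CStk Sym) : Alph.sharp ∉ w →
      proc w 0 [] = none → GInv (w ++ [Alph.star]) (MQ.r1, ((γ, n) :: t) :: rest)
  | atR2 {w} (γ : Sym) (n : ℕ) (t) (rest : CStk Sym) : Alph.sharp ∉ w →
      proc w 0 [] = none → GInv (w ++ [Alph.lb]) (MQ.r2, ((γ, n) :: t) :: rest)
  | atR3 {w} (γ : Sym) (n : ℕ) (t) (rest : CStk Sym) : Alph.sharp ∉ w →
      proc w 0 [] = none → GInv (w ++ [Alph.rb]) (MQ.r3, ((γ, n) :: t) :: rest)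
  | atF {u} (s : CStk Sym) : u ∈ U → GInv u (MQ.qF, s)
  | dead {u} (q : MQ) (s : CStk Sym) :
      (q = MQ.d0 ∨ q = MQ.d1 ∨ q = MQ.d2 ∨ q = MQ.d3) → GInv u (q, s)

lemma ginv_step {u c o c'} (h : GInv u c) (hs : CStep M c o c') :
    GInv (u ++ o.toList) c' := by
  cases h with
  | init =>
      obtain ⟨γ, hctop, hbr⟩ := cstep_inv hs
      simp [bstk, ctop?] at hctop; subst hctop
      rcases hbr with ⟨f, a, hδ, rfl, rfl⟩ | ⟨q', op, s', hδ, rfl, hcap, rfl⟩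
      · simp [dlt] at hδ
      · simp only [dlt, CTrans.op.injEq] at hδ
        obtain ⟨rfl, rfl⟩ := hδ
        simp only [bstk] at hcap
        rw [capply_push2] at hcap
        injection hcap with hcap; subst hcap
        exact GInv.atQ0 (st := []) (junk := []) ⟨by simp, rfl⟩ (by intro x hx; simp at hx)
  | @atQ0 w st junk hP hJ =>
      obtain ⟨γ, hctop, hbr⟩ := cstep_inv hs
      cases st with
      | nil =>
          simp [Stk, Tstk, ctop?] at hctop; subst hctop
          rcases hbr with ⟨f, a, hδ, rfl, rfl⟩ | ⟨q', op, s', hδ, rfl, hcap, rfl⟩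
          · simp only [dlt] at hδ
            injection hδ with hf; subst hf
            cases a with
            | star => exact GInv.atS1 hP hJ
            | lb => exact GInv.atO hP hJ
            | rb =>
                exact GInv.atInv Sym.e 1 [] (junk ++ [bstk]) (sharp_notin_snoc hP.1 (by simp))
                  (pw_close_none hP)
            | sharp => exact GInv.atF _ ⟨u, hP.1, by rw [stars_of_proc_nil hP.2]; rfl⟩
          · simp [dlt] at hδ
      | cons c0 st' =>
          simp [Stk, Tstk, ctop?] at hctop; subst hctop
          rcases hbr with ⟨f, a, hδ, rfl, rfl⟩ | ⟨q', op, s', hδ, rfl, hcap, rfl⟩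
          · simp only [dlt] at hδ
            injection hδ with hf; subst hf
            cases a with
            | star => exact GInv.atS1 hP hJ
            | lb => exact GInv.atO hP hJ
            | rb => exact GInv.atC hP hJ
            | sharp => exact GInv.atColl hP hJ
          · simp [dlt] at hδ
  | @atS1 w st junk hP hJ =>
      obtain ⟨γ, hctop, hbr⟩ := cstep_inv hs
      rcases hbr with ⟨f, a, hδ, rfl, rfl⟩ | ⟨q', op, s', hδ, rfl, hcap, rfl⟩
      · simp [dlt] at hδ
      · simp only [dlt, CTrans.op.injEq] at hδ
        obtain ⟨rfl, rfl⟩ := hδ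
        cases st with
        | nil =>
            rw [show Stk [] junk = ([(Sym.e, 1)]) :: (junk ++ [bstk]) from rfl,
              capply_push1] at hcap
            injection hcap with hcap; subst hcap
            simpa [Tstk] using GInv.atS2 ((junk ++ [bstk]).length + 1) hP hJ
        | cons c0 st' =>
            rw [show Stk (c0 :: st') junk =
              ((Sym.b, c0 + 2) :: Tstk st') :: (junk ++ [bstk]) from rfl,
              capply_push1] at hcap
            injection hcap with hcap; subst hcap
            simpa [Tstk] using GInv.atS2 ((junk ++ [bstk]).length + 1) hP hJ
  | @atS2 w st junk n hP hJ =>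
      obtain ⟨γ, hctop, hbr⟩ := cstep_inv hs
      rcases hbr with ⟨f, a, hδ, rfl, rfl⟩ | ⟨q', op, s', hδ, rfl, hcap, rfl⟩
      · simp [dlt] at hδ
      · simp only [dlt, CTrans.op.injEq] at hδ
        obtain ⟨rfl, rfl⟩ := hδ
        rw [capply_push2] at hcap
        injection hcap with hcap; subst hcap
        simpa using GInv.atS3 n hP hJ
  | @atS3 w st junk n hP hJ =>
      obtain ⟨γ, hctop, hbr⟩ := cstep_inv hs
      rcases hbr with ⟨f, a, hδ, rfl, rfl⟩ | ⟨q', op, s', hδ, rfl, hcap, rfl⟩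
      · simp [dlt] at hδ
      · simp only [dlt, CTrans.op.injEq] at hδ
        obtain ⟨rfl, rfl⟩ := hδ
        cases st with
        | nil =>
            rw [show Tstk [] = [(Sym.e, 1)] from rfl, capply_pop1] at hcap
            injection hcap with hcap; subst hcap
            have : Pw (w ++ [Alph.star]) ((((Sym.j, n) :: Tstk []) :: junk).length) [] := by
              simpa using pw_star hP
            simpa [Stk, Tstk] using GInv.atQ0 (st := []) (junk := ((Sym.j, n) :: Tstk []) :: junk) this
              (by intro x hx
                  rcases List.mem_cons.1 hx with rfl | hx
                  · exact ⟨_, _, rfl⟩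
                  · exact hJ x hx)
        | cons c0 st' =>
            rw [show Tstk (c0 :: st') = (Sym.b, c0 + 2) :: Tstk st' from rfl,
              capply_pop1] at hcap
            injection hcap with hcap; subst hcap
            have : Pw (w ++ [Alph.star]) ((((Sym.j, n) :: Tstk (c0 :: st')) :: junk).length)
                (c0 :: st') := by simpa using pw_star hP
            simpa [Stk, Tstk] using GInv.atQ0 (st := c0 :: st')
              (junk := ((Sym.j, n) :: Tstk (c0 :: st')) :: junk) this
              (by intro x hx
                  rcases List.mem_cons.1 hx with rfl | hx
                  · exact ⟨_, _, rfl⟩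
                  · exact hJ x hx)
  | @atO w st junk hP hJ =>
      obtain ⟨γ, hctop, hbr⟩ := cstep_inv hs
      rcases hbr with ⟨f, a, hδ, rfl, rfl⟩ | ⟨q', op, s', hδ, rfl, hcap, rfl⟩
      · simp [dlt] at hδ
      · simp only [dlt, CTrans.op.injEq] at hδ
        obtain ⟨rfl, rfl⟩ := hδ
        have hcap' : capply (Γ := Sym) (COp.push1 Sym.b) (Stk st junk) =
            some (Stk (junk.length :: st) junk) := by
          cases st <;> simp [Stk, Tstk, capply_push1]
        rw [hcap'] at hcap
        injection hcap with hcap; subst hcap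
        simpa using GInv.atQ0 (pw_open hP) hJ
  | @atC w c0 st junk hP hJ =>
      obtain ⟨γ, hctop, hbr⟩ := cstep_inv hs
      rcases hbr with ⟨f, a, hδ, rfl, rfl⟩ | ⟨q', op, s', hδ, rfl, hcap, rfl⟩
      · simp [dlt] at hδ
      · simp only [dlt, CTrans.op.injEq] at hδ
        obtain ⟨rfl, rfl⟩ := hδ
        cases st with
        | nil =>
            rw [show Stk [c0] junk =
              ((Sym.b, c0 + 2) :: Tstk []) :: (junk ++ [bstk]) from rfl,
              show Tstk [] = [(Sym.e, 1)] from rfl, capply_pop1] at hcap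
            injection hcap with hcap; subst hcap
            simpa [Stk, Tstk] using GInv.atQ0 (st := []) (pw_close hP) hJ
        | cons c1 st' =>
            rw [show Stk (c0 :: c1 :: st') junk =
              ((Sym.b, c0 + 2) :: (Sym.b, c1 + 2) :: Tstk st') :: (junk ++ [bstk]) from rfl,
              capply_pop1] at hcap
            injection hcap with hcap; subst hcap
            simpa [Stk, Tstk] using GInv.atQ0 (st := c1 :: st') (pw_close hP) hJ
  | @atColl w c0 st junk hP hJ =>
      obtain ⟨γ, hctop, hbr⟩ := cstep_inv hs
      rcases hbr with ⟨f, a, hδ, rfl, rfl⟩ | ⟨q', op, s', hδ, rfl, hcap, rfl⟩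
      · simp [dlt] at hδ
      · simp only [dlt, CTrans.op.injEq] at hδ
        obtain ⟨rfl, rfl⟩ := hδ
        have hb : c0 ≤ junk.length := pw_bound hP
        rw [show Stk (c0 :: st) junk =
          ((Sym.b, c0 + 2) :: Tstk st) :: (junk ++ [bstk]) from rfl,
          capply_collapse _ _ _ _ (by omega) (by simp; omega)] at hcap
        have e1 : (junk ++ [bstk]).length + 1 - (c0 + 2 - 1) = (junk.length - c0) + 1 := by
          simp; omega
        rw [e1, List.drop_succ_cons, List.drop_append_of_le_length (by omega)] at hcap
        injection hcap with hcap; subst hcap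
        have hdl : (junk.drop (junk.length - c0)).length = c0 := by
          rw [List.length_drop]; omega
        have hJ' : JQ (junk.drop (junk.length - c0)) :=
          fun x hx => hJ x (List.drop_subset _ _ hx)
        simpa [hdl] using GInv.atQ1 hP hJ' (le_of_eq hdl)
  | @atQ1 w c0 cnt st jl hP hJ hle =>
      obtain ⟨γ, hctop, hbr⟩ := cstep_inv hs
      cases jl with
      | nil =>
          simp [bstk, ctop?] at hctop; subst hctop
          rcases hbr with ⟨f, a, hδ, rfl, rfl⟩ | ⟨q', op, s', hδ, rfl, hcap, rfl⟩
          · simp [dlt] at hδ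
          · simp only [dlt, CTrans.op.injEq] at hδ
            obtain ⟨rfl, rfl⟩ := hδ
            refine GInv.atF _ ⟨w, hP.1, ?_⟩
            rw [stars_of_proc_cons hP.2]
            simp [Nat.add_comm]
      | cons s0 jl' =>
          obtain ⟨n, t, rfl⟩ := hJ s0 List.mem_cons_self
          simp [ctop?] at hctop; subst hctop
          rcases hbr with ⟨f, a, hδ, rfl, rfl⟩ | ⟨q', op, s', hδ, rfl, hcap, rfl⟩
          · simp only [dlt] at hδ
            injection hδ with hf; subst hf
            cases a with
            | star => exact GInv.dead _ _ (by simp)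
            | lb => exact GInv.dead _ _ (by simp)
            | rb => exact GInv.dead _ _ (by simp)
            | sharp =>
                have hle' : jl'.length + 1 ≤ c0 := by simpa using hle
                have heq : (w ++ List.replicate (1 + (c0 - (jl'.length + 1))) Alph.sharp)
                    ++ [Alph.sharp]
                    = w ++ List.replicate (2 + (c0 - (jl'.length + 1))) Alph.sharp := by
                  rw [List.append_assoc, ← List.replicate_succ']
                  congr 2
                  omega
                have := GInv.atP1 (s := (Sym.j, n) :: t) (jl := jl') hP ⟨n, t, rfl⟩
                  (fun x hx => hJ x (List.mem_cons_of_mem _ hx)) hle'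
                simpa [heq.symm] using this
          · simp [dlt] at hδ
  | @atP1 w c0 cnt st s0 jl hP hJs hJ hle =>
      obtain ⟨γ, hctop, hbr⟩ := cstep_inv hs
      rcases hbr with ⟨f, a, hδ, rfl, rfl⟩ | ⟨q', op, s', hδ, rfl, hcap, rfl⟩
      · simp [dlt] at hδ
      · simp only [dlt, CTrans.op.injEq] at hδ
        obtain ⟨rfl, rfl⟩ := hδ
        have hcap' : capply (Γ := Sym) COp.pop2 (s0 :: (jl ++ [bstk])) = some (jl ++ [bstk]) := by
          cases jl with
          | nil => exact capply_pop2 _ _ _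
          | cons x l => exact capply_pop2 _ _ _
        rw [hcap'] at hcap
        injection hcap with hcap; subst hcap
        have heq : 2 + (c0 - (jl.length + 1)) = 1 + (c0 - jl.length) := by omega
        have := GInv.atQ1 hP hJ (by omega : jl.length ≤ c0)
        simpa [heq] using this
  | @atInv w γ0 n t rest hw hnone =>
      obtain ⟨γ, hctop, hbr⟩ := cstep_inv hs
      simp [ctop?] at hctop; subst hctop
      rcases hbr with ⟨f, a, hδ, rfl, rfl⟩ | ⟨q', op, s', hδ, rfl, hcap, rfl⟩
      · simp only [dlt] at hδ
        injection hδ with hf; subst hf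
        cases a with
        | star => exact GInv.atR1 γ0 n t rest hw hnone
        | lb => exact GInv.atR2 γ0 n t rest hw hnone
        | rb => exact GInv.atR3 γ0 n t rest hw hnone
        | sharp => exact GInv.atF _ ⟨u, hw, by rw [stars_of_proc_none hnone]; rfl⟩
      · simp [dlt] at hδ
  | @atR1 w γ0 n t rest hw hnone =>
      obtain ⟨γ, hctop, hbr⟩ := cstep_inv hs
      rcases hbr with ⟨f, a, hδ, rfl, rfl⟩ | ⟨q', op, s', hδ, rfl, hcap, rfl⟩
      · simp [dlt] at hδ
      · simp only [dlt, CTrans.op.injEq] at hδ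
        obtain ⟨rfl, rfl⟩ := hδ
        rw [capply_push1] at hcap
        injection hcap with hcap; subst hcap
        simpa using GInv.atInv _ _ _ _ (sharp_notin_snoc hw (by simp)) (proc_none_append _ hnone)
  | @atR2 w γ0 n t rest hw hnone =>
      obtain ⟨γ, hctop, hbr⟩ := cstep_inv hs
      rcases hbr with ⟨f, a, hδ, rfl, rfl⟩ | ⟨q', op, s', hδ, rfl, hcap, rfl⟩
      · simp [dlt] at hδ
      · simp only [dlt, CTrans.op.injEq] at hδ
        obtain ⟨rfl, rfl⟩ := hδ
        rw [capply_push1] at hcap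
        injection hcap with hcap; subst hcap
        simpa using GInv.atInv _ _ _ _ (sharp_notin_snoc hw (by simp)) (proc_none_append _ hnone)
  | @atR3 w γ0 n t rest hw hnone =>
      obtain ⟨γ, hctop, hbr⟩ := cstep_inv hs
      rcases hbr with ⟨f, a, hδ, rfl, rfl⟩ | ⟨q', op, s', hδ, rfl, hcap, rfl⟩
      · simp [dlt] at hδ
      · simp only [dlt, CTrans.op.injEq] at hδ
        obtain ⟨rfl, rfl⟩ := hδ
        rw [capply_push1] at hcap
        injection hcap with hcap; subst hcap
        simpa using GInv.atInv _ _ _ _ (sharp_notin_snoc hw (by simp)) (proc_none_append _ hnone)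
  | @atF u s0 hU =>
      obtain ⟨γ, hctop, hbr⟩ := cstep_inv hs
      have hδ' : dlt MQ.qF γ = .read deadF := by cases γ <;> rfl
      rcases hbr with ⟨f, a, hδ, rfl, rfl⟩ | ⟨q', op, s', hδ, rfl, hcap, rfl⟩
      · rw [hδ'] at hδ
        injection hδ with hf; subst hf
        cases a <;> exact GInv.dead _ _ (by simp [deadF])
      · rw [hδ'] at hδ
        cases hδ
  | @dead u q0 s0 hq =>
      obtain ⟨γ, hctop, hbr⟩ := cstep_inv hs
      have hδ' : dlt q0 γ = .read deadF := by
        rcases hq with rfl | rfl | rfl | rfl <;> cases γ <;> rfl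
      rcases hbr with ⟨f, a, hδ, rfl, rfl⟩ | ⟨q', op, s', hδ, rfl, hcap, rfl⟩
      · rw [hδ'] at hδ
        injection hδ with hf; subst hf
        cases a <;> exact GInv.dead _ _ (by simp [deadF])
      · rw [hδ'] at hδ
        cases hδ

lemma ginv_reach {c u c'} (h : Reach c u c') : ∀ {v}, GInv v c → GInv (v ++ u) c' := by
  induction h with
  | refl c => intro v hg; simpa using hg
  | stepE hs _ ih =>
      intro v hg
      exact ih (by simpa using ginv_step hg hs)
  | @stepR c c₁ c₂ u a hs _ ih =>
      intro v hg
      have := ih (v := v ++ [a]) (by simpa using ginv_step hg hs)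
      simpa using this

lemma CLang_subset_U : CLang M ⊆ U := by
  intro u hu
  rw [mem_CLang_iff] at hu
  obtain ⟨c, hr, hF⟩ := hu
  have hg : GInv ([] ++ u) c := ginv_reach hr GInv.init
  simp only [List.nil_append] at hg
  have hq : c.1 = MQ.qF := hF
  obtain ⟨q, s⟩ := c
  simp only at hq
  subst hq
  cases hg with
  | atF s hU => exact hU
  | dead q s hq => rcases hq with h | h | h | h <;> cases h

end Statement2Proof

/-- The language `U` over the alphabet `{[, ], ⋆, ♯}` is recognized by a
deterministic order-2 collapsible pushdown automaton. -/
theorem statement2 :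
    ∃ (Γ : Type) (_ : Finite Γ) (D : CPDA2 Alph Γ), CLang D = U :=
  ⟨Sym, inferInstance, M, Set.Subset.antisymm CLang_subset_U U_subset_CLang⟩

end HOPDA
end

section
/- Let 1 ≤ k ≤ n and let R be a k-upper run of an n-DPDA. Then R is (k−1)-upper if and only if |top^k(R(0))| ≤ |top^k(R(i))| for each i ∈ [0,|R|] such that the suffix R[i,|R|] is k-upper, where |s| denotes the number of (k−1)-stacks in the k-stack s. -/
namespace HOPDA

instance : Fintype Alph :=
  ⟨{Alph.lb, Alph.rb, Alph.star, Alph.sharp}, fun x => by cases x <;> simp⟩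

/-! ### Auxiliary lemmas for Statement 5 -/

section Aux

variable {Γ : Type}

theorem sub?_nil (s : St Γ) : sub? s [] = some s := by cases s <;> rfl

theorem modAt_nil (s : St Γ) (f : St Γ → Option (St Γ)) : modAt s [] f = f s := by
  cases s <;> rfl

theorem modAt_cons {l : List (St Γ)} {i : ℕ} {p : List ℕ} {f : St Γ → Option (St Γ)}
    {s' : St Γ} (h : modAt (St.node l) (i :: p) f = some s') :
    ∃ t t'', l[i]? = some t ∧ modAt t p f = some t'' ∧ s' = St.node (l.set i t'') := by
  simp only [modAt] at h
  cases hl : l[i]? with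
  | none => rw [hl] at h; exact (Option.some_ne_none _ h.symm).elim
  | some t =>
      rw [hl] at h
      have h' : (match modAt t p f with
          | none => none
          | some t' => some (St.node (l.set i t'))) = some s' := h
      cases hm : modAt t p f with
      | none => rw [hm] at h'; exact (Option.some_ne_none _ h'.symm).elim
      | some t'' =>
          rw [hm] at h'
          exact ⟨t, t'', rfl, hm, (Option.some.inj h').symm⟩

theorem sub?_cons {l : List (St Γ)} {i : ℕ} {p : List ℕ} :
    sub? (St.node l) (i :: p) = (l[i]?).bind (fun t => sub? t p) := by
  simp only [sub?]
  cases hl : l[i]? <;> simp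

theorem sub?_append (s : St Γ) (u v : List ℕ) :
    sub? s (u ++ v) = (sub? s u).bind (fun t => sub? t v) := by
  induction u generalizing s with
  | nil => simp [sub?]
  | cons i p ih =>
      cases s with
      | leaf γ => simp [sub?]
      | node l =>
          rw [List.cons_append, sub?_cons, sub?_cons]
          cases hl : l[i]? with
          | none => simp
          | some t => simp [ih]

theorem sub?_isSome_of_prefix {s : St Γ} {u v : List ℕ} (h : (sub? s (u ++ v)).isSome) :
    (sub? s u).isSome := by
  rw [sub?_append] at h
  cases hh : sub? s u with
  | none => rw [hh] at h; simp at h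
  | some t => simp

theorem modAt_spec {s s' : St Γ} {u : List ℕ} {f : St Γ → Option (St Γ)}
    (h : modAt s u f = some s') :
    ∃ t t', sub? s u = some t ∧ f t = some t' ∧ sub? s' u = some t' := by
  induction u generalizing s s' with
  | nil =>
      refine ⟨s, s', sub?_nil s, ?_, sub?_nil s'⟩
      rw [← modAt_nil s f]; exact h
  | cons i p ih =>
      cases s with
      | leaf γ => exact (Option.some_ne_none _ h.symm).elim
      | node l =>
          obtain ⟨t, t'', hl, hm, rfl⟩ := modAt_cons h
          obtain ⟨a, a', ha, ha', ha''⟩ := ih hm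
          have hi : i < l.length := (List.getElem?_eq_some_iff.mp hl).1
          refine ⟨a, a', ?_, ha', ?_⟩
          · rw [sub?_cons, hl]; exact ha
          · rw [sub?_cons, List.getElem?_set_self hi]; exact ha''

theorem modAt_off {s s' : St Γ} {u : List ℕ} {f : St Γ → Option (St Γ)}
    (h : modAt s u f = some s') :
    ∀ v, ¬ u <+: v → ¬ v <+: u → sub? s' v = sub? s v := by
  induction u generalizing s s' with
  | nil => intro v hv _; exact absurd List.nil_prefix hv
  | cons i p ih =>
      intro v hv hv'
      cases s with
      | leaf γ => exact (Option.some_ne_none _ h.symm).elim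
      | node l =>
          obtain ⟨t, t'', hl, hm, rfl⟩ := modAt_cons h
          have hi : i < l.length := (List.getElem?_eq_some_iff.mp hl).1
          cases v with
          | nil => exact absurd List.nil_prefix hv'
          | cons j w =>
              by_cases hij : j = i
              · subst hij
                have hw : ¬ p <+: w := fun hc => hv (List.cons_prefix_cons.mpr ⟨rfl, hc⟩)
                have hw' : ¬ w <+: p := fun hc => hv' (List.cons_prefix_cons.mpr ⟨rfl, hc⟩)
                rw [sub?_cons, sub?_cons, List.getElem?_set_self hi, hl]
                simp only [Option.bind_some]
                exact ih hm w hw hw'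
              · rw [sub?_cons, sub?_cons, List.getElem?_set_ne]
                omega

theorem modAt_anc {s s' : St Γ} {u : List ℕ} {f : St Γ → Option (St Γ)}
    (h : modAt s u f = some s') :
    ∀ v w, u = v ++ w → w ≠ [] →
      ∃ l l', sub? s v = some (St.node l) ∧ sub? s' v = some (St.node l') ∧
        l'.length = l.length := by
  induction u generalizing s s' with
  | nil =>
      intro v w hvw hw
      exact absurd (List.append_eq_nil_iff.mp hvw.symm).2 hw
  | cons i p ih =>
      intro v w hvw hw
      cases s with
      | leaf γ => exact (Option.some_ne_none _ h.symm).elim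
      | node l =>
          obtain ⟨t, t'', hl, hm, rfl⟩ := modAt_cons h
          have hi : i < l.length := (List.getElem?_eq_some_iff.mp hl).1
          cases v with
          | nil =>
              exact ⟨l, l.set i t'', rfl, rfl, by simp⟩
          | cons j v' =>
              simp only [List.cons_append, List.cons.injEq] at hvw
              obtain ⟨rfl, hvw⟩ := hvw
              obtain ⟨a, a', h1, h2, h3⟩ := ih hm v' w hvw hw
              refine ⟨a, a', ?_, ?_, h3⟩
              · rw [sub?_cons, hl]; exact h1
              · rw [sub?_cons, List.getElem?_set_self hi]; exact h2

theorem valid_sub {n : ℕ} {s t : St Γ} {v : List ℕ} (hs : IsValid n s)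
    (h : sub? s v = some t) : IsValid (n - v.length) t := by
  induction v generalizing s n with
  | nil =>
      rw [sub?_nil] at h
      have : s = t := Option.some.inj h
      subst this; simpa using hs
  | cons i p ih =>
      cases s with
      | leaf γ => exact (Option.some_ne_none _ h.symm).elim
      | node l =>
          cases n with
          | zero => exact absurd hs (by simp [IsValid])
          | succ e =>
              rw [sub?_cons] at h
              cases hl : l[i]? with
              | none => rw [hl] at h; exact (Option.some_ne_none _ h.symm).elim
              | some a =>
                  rw [hl] at h
                  simp only [Option.bind_some] at h
                  have ha : a ∈ l := List.mem_of_getElem? hl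
                  have := ih (hs.2 a ha) h
                  simpa [Nat.succ_sub_succ] using this

theorem valid_modAt {n : ℕ} {s s' : St Γ} {u : List ℕ} {f : St Γ → Option (St Γ)}
    (hs : IsValid n s) (h : modAt s u f = some s')
    (hf : ∀ t t', sub? s u = some t → f t = some t' →
      IsValid (n - u.length) t') : IsValid n s' := by
  induction u generalizing s s' n with
  | nil =>
      have := hf s s' (sub?_nil s) (by rw [← modAt_nil s f]; exact h)
      simpa using this
  | cons i p ih =>
      cases s with
      | leaf γ => exact (Option.some_ne_none _ h.symm).elim
      | node l =>
          cases n with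
          | zero => exact absurd hs (by simp [IsValid])
          | succ e =>
              obtain ⟨t, t'', hl, hm, rfl⟩ := modAt_cons h
              have ht : t ∈ l := List.mem_of_getElem? hl
              have ht'' : IsValid e t'' := by
                refine ih (hs.2 t ht) hm ?_
                intro a a' ha ha'
                have := hf a a' (by rw [sub?_cons, hl]; exact ha) ha'
                simpa [Nat.succ_sub_succ] using this
              refine ⟨fun hc => hs.1 (by simpa using congrArg List.length hc), ?_⟩
              intro x hx
              rcases List.mem_or_eq_of_mem_set hx with hx' | rfl
              · exact hs.2 x hx'
              · exact ht''


theorem valid_node {Γ : Type} {n : ℕ} {s : St Γ} (hs : IsValid (n + 1) s) :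
    ∃ l, s = St.node l ∧ l ≠ [] ∧ ∀ t ∈ l, IsValid n t := by
  cases s with
  | leaf γ => exact absurd hs (by simp [IsValid])
  | node l => exact ⟨l, rfl, hs.1, hs.2⟩

theorem getElem?_last {α : Type _} {l : List α} (d : α) (h : l ≠ []) :
    l[l.length - 1]? = some (l.getLastD d) := by
  rw [← List.getLast?_eq_getElem?, List.getLastD_eq_getLast?]
  cases hl : l.getLast? with
  | none => exact absurd (List.getLast?_eq_none_iff.mp hl) h
  | some a => rfl

theorem topAddr_zero {Γ : Type} (s : St Γ) : topAddr s 0 = [] := by cases s <;> rfl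

theorem topAddr_node {Γ : Type} (l : List (St Γ)) (d : ℕ) :
    topAddr (St.node l) (d + 1) =
      (l.length - 1) :: topAddr (l.getLastD (St.node [])) d := rfl

theorem sub?_topAddr {Γ : Type} {n : ℕ} {s : St Γ} (hs : IsValid n s) :
    ∀ d ≤ n, ∃ t, sub? s (topAddr s d) = some t ∧ IsValid (n - d) t := by
  induction n generalizing s with
  | zero =>
      intro d hd
      interval_cases d
      exact ⟨s, by rw [topAddr_zero]; exact sub?_nil s, by simpa using hs⟩
  | succ e ih =>
      intro d hd
      cases d with
      | zero => exact ⟨s, by rw [topAddr_zero]; exact sub?_nil s, by simpa using hs⟩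
      | succ d' =>
          obtain ⟨l, rfl, hne, hmem⟩ := valid_node hs
          have hlast := getElem?_last (St.node ([] : List (St Γ))) hne
          set t := l.getLastD (St.node []) with ht
          have htmem : t ∈ l := List.mem_of_getElem? hlast
          obtain ⟨u, hu, hu'⟩ := ih (hmem t htmem) d' (by omega)
          refine ⟨u, ?_, by simpa [Nat.succ_sub_succ] using hu'⟩
          rw [topAddr_node, sub?_cons, hlast, Option.bind_some]
          exact hu

theorem topAddr_length {Γ : Type} {n : ℕ} {s : St Γ} (hs : IsValid n s) :
    ∀ d ≤ n, (topAddr s d).length = d := by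
  induction n generalizing s with
  | zero => intro d hd; interval_cases d; rw [topAddr_zero]; rfl
  | succ e ih =>
      intro d hd
      cases d with
      | zero => rw [topAddr_zero]; rfl
      | succ d' =>
          obtain ⟨l, rfl, hne, hmem⟩ := valid_node hs
          have hlast := getElem?_last (St.node ([] : List (St Γ))) hne
          rw [topAddr_node]
          rw [List.length_cons, ih (hmem _ (List.mem_of_getElem? hlast)) d' (by omega)]

theorem sizeAt_topAddr {Γ : Type} {n : ℕ} {s : St Γ} (hs : IsValid n s) {d : ℕ}
    (hd : d < n) :
    ∃ l, sub? s (topAddr s d) = some (St.node l) ∧ l ≠ [] ∧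
      sizeAt s (topAddr s d) = l.length := by
  obtain ⟨t, ht, hv⟩ := sub?_topAddr hs d (le_of_lt hd)
  have : 0 < n - d := by omega
  obtain ⟨e, he⟩ : ∃ e, n - d = e + 1 := ⟨n - d - 1, by omega⟩
  rw [he] at hv
  obtain ⟨l, rfl, hne, _⟩ := valid_node hv
  exact ⟨l, ht, hne, by simp [sizeAt, ht]⟩

theorem topAddr_succ {Γ : Type} {n : ℕ} {s : St Γ} (hs : IsValid n s) :
    ∀ d < n, topAddr s (d + 1) = topAddr s d ++ [sizeAt s (topAddr s d) - 1] := by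
  induction n generalizing s with
  | zero => intro d hd; omega
  | succ e ih =>
      intro d hd
      obtain ⟨l, rfl, hne, hmem⟩ := valid_node hs
      cases d with
      | zero =>
          rw [topAddr_node]
          have h0 : sizeAt (St.node l) [] = l.length := by simp [sizeAt, sub?_nil]
          rw [topAddr_zero, topAddr_zero, h0]
          rfl
      | succ d' =>
          have hlast := getElem?_last (St.node ([] : List (St Γ))) hne
          set t := l.getLastD (St.node []) with ht
          have htv : IsValid e t := hmem t (List.mem_of_getElem? hlast)
          have hsz : sizeAt (St.node l) (topAddr (St.node l) (d' + 1)) =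
              sizeAt t (topAddr t d') := by
            rw [topAddr_node, sizeAt, sizeAt, sub?_cons, hlast, Option.bind_some]
          rw [hsz, topAddr_node, topAddr_node, ih htv d' (by omega)]
          rfl

theorem topAddr_take {Γ : Type} {n : ℕ} {s : St Γ} (hs : IsValid n s) :
    ∀ d e, d ≤ e → e ≤ n → topAddr s d ++ (topAddr s e).drop d = topAddr s e := by
  intro d e hde hen
  induction e with
  | zero => interval_cases d; simp [topAddr_zero]
  | succ e' ih =>
      rcases Nat.lt_or_ge d (e' + 1) with hlt | hge
      · have := ih (by omega) (by omega)
        rw [topAddr_succ hs e' (by omega), List.drop_append_of_le_length, ← List.append_assoc,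
          this]
        rw [topAddr_length hs e' (by omega)]; omega
      · have hd' : d = e' + 1 := by omega
        subst hd'
        rw [List.drop_eq_nil_of_le (le_of_eq (topAddr_length hs _ hen)), List.append_nil]

theorem topAddr_prefix {Γ : Type} {n : ℕ} {s : St Γ} (hs : IsValid n s)
    {d e : ℕ} (hde : d ≤ e) (hen : e ≤ n) : topAddr s d <+: topAddr s e :=
  ⟨(topAddr s e).drop d, topAddr_take hs d e hde hen⟩

theorem topAddr_modAt {Γ : Type} {n : ℕ} {s s' : St Γ} (hs : IsValid n s)
    {f : St Γ → Option (St Γ)} :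
    ∀ e ≤ n, modAt s (topAddr s e) f = some s' →
      ∀ d ≤ e, topAddr s' d = topAddr s d := by
  induction n generalizing s s' with
  | zero =>
      intro e he h d hd
      interval_cases e; interval_cases d; rw [topAddr_zero, topAddr_zero]
  | succ m ih =>
      intro e he h d hd
      cases e with
      | zero => interval_cases d; rw [topAddr_zero, topAddr_zero]
      | succ e' =>
          obtain ⟨l, rfl, hne, hmem⟩ := valid_node hs
          have hlast := getElem?_last (St.node ([] : List (St Γ))) hne
          set t := l.getLastD (St.node []) with ht
          rw [topAddr_node] at h
          obtain ⟨a, t'', hl, hm, rfl⟩ := modAt_cons h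
          rw [hlast] at hl
          cases Option.some.inj hl
          have htv : IsValid m t := hmem t (List.mem_of_getElem? hlast)
          cases d with
          | zero => rw [topAddr_zero, topAddr_zero]
          | succ d' =>
              have hlen : l.length - 1 < l.length := by
                have : l.length ≠ 0 := fun hc => hne (List.length_eq_zero_iff.mp hc)
                omega
              have hset : (l.set (l.length - 1) t'').getLastD (St.node []) = t'' := by
                have h1 : (l.set (l.length - 1) t'').length = l.length := by simp
                have := getElem?_last (St.node ([] : List (St Γ)))
                  (l := l.set (l.length - 1) t'') (by
                    intro hc
                    exact hne (by simpa using congrArg List.length hc))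
                rw [h1, List.getElem?_set_self hlen] at this
                exact (Option.some.inj this).symm
              rw [topAddr_node, topAddr_node, List.length_set, hset]
              have := ih htv e' (by omega) hm d' (by omega)
              rw [this]


theorem modAt_leaf_isSome {Γ : Type} {f : St Γ → Option (St Γ)}
    (hf : ∀ a b, f a = some b → (∃ x, a = St.leaf x) ∧ (∃ y, b = St.leaf y))
    {t t' : St Γ} {u : List ℕ} (h : modAt t u f = some t') :
    ∀ w, (sub? t' w).isSome → (sub? t w).isSome := by
  induction u generalizing t t' with
  | nil =>
      rw [modAt_nil] at h
      obtain ⟨⟨x, rfl⟩, ⟨y, rfl⟩⟩ := hf t t' h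
      intro w hw
      cases w with
      | nil => rw [sub?_nil]; rfl
      | cons c w' => exact absurd hw (by simp [sub?])
  | cons i p ih =>
      cases t with
      | leaf γ => exact (Option.some_ne_none _ h.symm).elim
      | node l =>
          obtain ⟨a, a'', hl, hm, rfl⟩ := modAt_cons h
          have hi : i < l.length := (List.getElem?_eq_some_iff.mp hl).1
          intro w hw
          cases w with
          | nil => rw [sub?_nil]; rfl
          | cons j w' =>
              rw [sub?_cons] at hw ⊢
              by_cases hij : j = i
              · subst hij
                rw [List.getElem?_set_self hi] at hw
                rw [hl, Option.bind_some]
                exact ih hm w' (by simpa using hw)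
              · rwa [List.getElem?_set_ne (by omega)] at hw

theorem modAt_leaf_valid {Γ : Type} {f : St Γ → Option (St Γ)}
    (hf : ∀ a b, f a = some b → (∃ x, a = St.leaf x) ∧ (∃ y, b = St.leaf y))
    {t t' : St Γ} {u : List ℕ} (h : modAt t u f = some t') :
    ∀ d, IsValid d t → IsValid d t' := by
  induction u generalizing t t' with
  | nil =>
      rw [modAt_nil] at h
      obtain ⟨⟨x, rfl⟩, ⟨y, rfl⟩⟩ := hf t t' h
      intro d hd
      cases d with
      | zero => trivial
      | succ e => exact absurd hd (by simp [IsValid])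
  | cons i p ih =>
      cases t with
      | leaf γ => exact (Option.some_ne_none _ h.symm).elim
      | node l =>
          obtain ⟨a, a'', hl, hm, rfl⟩ := modAt_cons h
          intro d hd
          cases d with
          | zero => exact absurd hd (by simp [IsValid])
          | succ e =>
              refine ⟨fun hc => hd.1 (by simpa using congrArg List.length hc), ?_⟩
              intro x hx
              rcases List.mem_or_eq_of_mem_set hx with hx' | rfl
              · exact hd.2 x hx'
              · exact ih hm e (hd.2 a (List.mem_of_getElem? hl))

theorem popStk_eq {Γ : Type} {t t' : St Γ} (h : popStk t = some t') :
    ∃ l, t = St.node l ∧ 2 ≤ l.length ∧ t' = St.node l.dropLast := by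
  cases t with
  | leaf γ => exact (Option.some_ne_none _ h.symm).elim
  | node l =>
      simp only [popStk] at h
      split at h
      · exact ⟨l, rfl, by assumption, (Option.some.inj h).symm⟩
      · exact (Option.some_ne_none _ h.symm).elim

theorem pop_facts {Γ : Type} {n r : ℕ} (hr1 : 1 ≤ r) (hrn : r ≤ n) {s s' : St Γ}
    (hs : IsValid n s) (h : popOp n r s = some s') :
    IsValid n s' ∧ (∀ d ≤ n - r, topAddr s' d = topAddr s d) ∧
    (sizeAt s' (topAddr s (n - r)) = sizeAt s (topAddr s (n - r)) - 1 ∧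
      2 ≤ sizeAt s (topAddr s (n - r))) ∧
    (∀ d < n - r, sizeAt s' (topAddr s d) = sizeAt s (topAddr s d)) ∧
    (∀ v, (sub? s' v).isSome → (sub? s v).isSome) := by
  unfold popOp at h
  set ta := topAddr s (n - r) with hta
  have htalen : ta.length = n - r := topAddr_length hs _ (by omega)
  obtain ⟨t, t', hsub, hpop, hsub'⟩ := modAt_spec h
  obtain ⟨l, rfl, hl2, rfl⟩ := popStk_eq hpop
  have hszta : sizeAt s ta = l.length := by simp [sizeAt, hsub]
  have hszta' : sizeAt s' ta = l.length - 1 := by simp [sizeAt, hsub']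
  refine ⟨?_, ?_, ⟨by omega, by omega⟩, ?_, ?_⟩
  · refine valid_modAt hs h ?_
    intro a a' ha ha'
    rw [hsub] at ha; cases Option.some.inj ha
    obtain ⟨l₀, he, hl₀2, rfl⟩ := popStk_eq ha'
    have hll : l₀ = l := (St.node.inj he).symm
    subst hll
    have hv : IsValid (n - ta.length) (St.node l₀) := valid_sub hs hsub
    rw [htalen] at hv ⊢
    obtain ⟨e, hre⟩ : ∃ e, n - (n - r) = e + 1 := ⟨n - (n-r) - 1, by omega⟩
    rw [hre] at hv ⊢
    refine ⟨fun hc => ?_, fun x hx => hv.2 x ((List.dropLast_sublist _).subset hx)⟩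
    have := congrArg List.length hc
    simp at this
    omega
  · intro d hd
    exact topAddr_modAt hs (n - r) (by omega) h d hd
  · intro d hd
    have hdr : (topAddr s (n - r)).drop d ≠ [] := by
      intro hc
      have := congrArg List.length hc
      simp [htalen] at this
      have := topAddr_length hs (n - r) (by omega); omega
    obtain ⟨l₁, l₂, h1, h2, h3⟩ := modAt_anc h (topAddr s d) ((topAddr s (n - r)).drop d)
      (topAddr_take hs d (n - r) (by omega) (by omega)).symm hdr
    simp [sizeAt, h1, h2, h3]
  · intro v hv
    by_cases hp : ta <+: v
    · obtain ⟨w, rfl⟩ := hp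
      rw [sub?_append, hsub', Option.bind_some] at hv
      rw [sub?_append, hsub, Option.bind_some]
      cases w with
      | nil => rw [sub?_nil]; rfl
      | cons c w' =>
          rw [sub?_cons] at hv ⊢
          rw [List.getElem?_dropLast] at hv
          split at hv
          · exact hv
          · simp at hv
    · by_cases hq : v <+: ta
      · obtain ⟨w, hw⟩ := hq
        exact sub?_isSome_of_prefix (u := v) (v := w) (by rw [hw, hsub]; rfl)
      · rw [modAt_off h v hp hq] at hv
        exact hv


theorem histStep_pop {Γ : Type} (n k : ℕ) (s : St Γ) (p : List ℕ) :
    histStep n (Op.pop k) s p = p := rfl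

theorem histStep_push {Γ : Type} (n r : ℕ) (γ : Γ) (s : St Γ) (p : List ℕ) :
    histStep n (Op.push r γ) s p =
      if p.take (n - r + 1) = topAddr s (n - r) ++ [sizeAt s (topAddr s (n - r))] then
        p.set (n - r) (sizeAt s (topAddr s (n - r)) - 1)
      else p := rfl

theorem dupTop_eq {Γ : Type} {r : ℕ} {γ : Γ} {t t' : St Γ} (h : dupTop r γ t = some t') :
    ∃ l tl tl', t = St.node l ∧ l.getLast? = some tl ∧
      modAt tl (topAddr tl (r - 1)) (fun u =>
        match u with
        | St.leaf _ => some (St.leaf γ)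
        | St.node _ => none) = some tl' ∧ t' = St.node (l ++ [tl']) := by
  cases t with
  | leaf x => exact (Option.some_ne_none _ h.symm).elim
  | node l =>
      simp only [dupTop] at h
      cases hg : l.getLast? with
      | none => rw [hg] at h; exact (Option.some_ne_none _ h.symm).elim
      | some tl =>
          rw [hg] at h
          have h' : (match modAt tl (topAddr tl (r - 1)) (fun u =>
              match u with
              | St.leaf _ => some (St.leaf γ)
              | St.node _ => none) with
            | none => none
            | some t'' => some (St.node (l ++ [t'']))) = some t' := h
          cases hm : modAt tl (topAddr tl (r - 1)) (fun u =>
              match u with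
              | St.leaf _ => some (St.leaf γ)
              | St.node _ => none) with
          | none => rw [hm] at h'; exact (Option.some_ne_none _ h'.symm).elim
          | some tl' =>
              rw [hm] at h'
              exact ⟨l, tl, tl', rfl, hg, hm, (Option.some.inj h').symm⟩

theorem leaf_rep_spec {Γ : Type} (γ : Γ) : ∀ a b : St Γ,
    (match a with
      | St.leaf _ => some (St.leaf γ)
      | St.node _ => none) = some b → (∃ x, a = St.leaf x) ∧ (∃ y, b = St.leaf y) := by
  intro a b hab
  cases a with
  | leaf x => exact ⟨⟨x, rfl⟩, ⟨γ, (Option.some.inj hab).symm⟩⟩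
  | node l => exact (Option.some_ne_none _ hab.symm).elim

theorem push_facts {Γ : Type} {n r : ℕ} (hr1 : 1 ≤ r) (hrn : r ≤ n) {γ : Γ} {s s' : St Γ}
    (hs : IsValid n s) (h : pushOp n r γ s = some s') :
    IsValid n s' ∧ (∀ d ≤ n - r, topAddr s' d = topAddr s d) ∧
    sizeAt s' (topAddr s (n - r)) = sizeAt s (topAddr s (n - r)) + 1 ∧
    (∀ d < n - r, sizeAt s' (topAddr s d) = sizeAt s (topAddr s d)) ∧
    (∀ v, (sub? s' v).isSome →
      (sub? s (histStep n (Op.push r γ) s v)).isSome) := by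
  unfold pushOp at h
  set ta := topAddr s (n - r) with hta
  have htalen : ta.length = n - r := topAddr_length hs _ (by omega)
  obtain ⟨t, t', hsub, hdup, hsub'⟩ := modAt_spec h
  obtain ⟨l, tl, tl', rfl, hg, hm, rfl⟩ := dupTop_eq hdup
  have hlast : l[l.length - 1]? = some tl := by
    rw [← List.getLast?_eq_getElem?]; exact hg
  have hlne : l ≠ [] := by
    intro hc; subst hc; exact (Option.some_ne_none _ hg.symm).elim
  have hvt : IsValid r (St.node l) := by
    have := valid_sub hs hsub
    rwa [htalen, Nat.sub_sub_self hrn] at this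
  have hszta : sizeAt s ta = l.length := by simp [sizeAt, hsub]
  have hszta' : sizeAt s' ta = l.length + 1 := by simp [sizeAt, hsub']
  refine ⟨?_, ?_, by omega, ?_, ?_⟩
  · refine valid_modAt hs h ?_
    intro a a' ha ha'
    rw [hsub] at ha; cases Option.some.inj ha
    obtain ⟨l₀, tl₀, tl₀', he, hg₀, hm₀, rfl⟩ := dupTop_eq ha'
    have hll : l₀ = l := (St.node.inj he).symm
    subst hll
    rw [htalen, Nat.sub_sub_self hrn]
    obtain ⟨e, hre⟩ : ∃ e, r = e + 1 := ⟨r - 1, by omega⟩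
    subst hre
    have hg0 : tl₀ = tl := Option.some.inj (hg₀.symm.trans hg)
    refine ⟨by simp, ?_⟩
    intro x hx
    rcases List.mem_append.mp hx with hx' | hx'
    · exact hvt.2 x hx'
    · have : x = tl₀' := by simpa using hx'
      subst this
      rw [hg0] at hm₀
      exact modAt_leaf_valid (leaf_rep_spec γ) hm₀ e
        (hvt.2 tl (List.mem_of_getLast? hg))
  · intro d hd
    exact topAddr_modAt hs (n - r) (by omega) h d hd
  · intro d hd
    have hdr : (topAddr s (n - r)).drop d ≠ [] := by
      intro hc
      have := congrArg List.length hc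
      simp [htalen] at this
      have := topAddr_length hs (n - r) (by omega); omega
    obtain ⟨l₁, l₂, h1, h2, h3⟩ := modAt_anc h (topAddr s d) ((topAddr s (n - r)).drop d)
      (topAddr_take hs d (n - r) (by omega) (by omega)).symm hdr
    simp [sizeAt, h1, h2, h3]
  · intro v hv
    rw [histStep_push, ← hta, hszta]
    by_cases hcond : v.take (n - r + 1) = ta ++ [l.length]
    · rw [if_pos hcond]
      have hvw : (ta ++ [l.length]) ++ v.drop (n - r + 1) = v := by
        rw [← hcond, List.take_append_drop]
      set w := v.drop (n - r + 1) with hw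
      rw [← hvw] at hv
      rw [List.append_assoc, List.singleton_append] at hvw
      have hset : v.set (n - r) (l.length - 1) = ta ++ (l.length - 1) :: w := by
        rw [← hvw, List.set_append_right _ _ (by omega), htalen]
        have : n - r - (n - r) = 0 := by omega
        rw [this, List.set_cons_zero]
      rw [hset]
      rw [List.append_assoc, List.singleton_append, sub?_append, hsub',
        Option.bind_some, sub?_cons, List.getElem?_concat_length,
        Option.bind_some] at hv
      rw [sub?_append, hsub, Option.bind_some, sub?_cons, hlast, Option.bind_some]
      exact modAt_leaf_isSome (leaf_rep_spec γ) hm w hv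
    · rw [if_neg hcond]
      by_cases hp : ta <+: v
      · obtain ⟨w, rfl⟩ := hp
        rw [sub?_append, hsub, Option.bind_some]
        rw [sub?_append, hsub', Option.bind_some] at hv
        cases w with
        | nil => rw [sub?_nil]; rfl
        | cons c w' =>
            rw [sub?_cons] at hv ⊢
            have hc1 : c < l.length + 1 := by
              by_contra hcge
              rw [List.getElem?_eq_none (by simp; omega)] at hv
              simp at hv
            have hc2 : c ≠ l.length := by
              intro hcc
              subst hcc
              refine hcond ?_
              have : ta ++ l.length :: w' = (ta ++ [l.length]) ++ w' := by
                rw [List.append_assoc, List.singleton_append]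
              rw [this, List.take_left' (by simp [htalen])]
            rw [List.getElem?_append_left (by omega)] at hv
            exact hv
      · by_cases hq : v <+: ta
        · obtain ⟨w, hw⟩ := hq
          exact sub?_isSome_of_prefix (u := v) (v := w) (by rw [hw, hsub]; rfl)
        · rw [modAt_off h v hp hq] at hv
          exact hv


theorem step_cases {n : ℕ} {A Γ : Type} {D : DPDA n A Γ} (R : Run D) (j : ℕ)
    (hj : j < R.len) :
    IsValid n (R.cfg j).2 ∧
    (((R.cfg (j + 1)).2 = (R.cfg j).2 ∧ R.stepHist j = id) ∨
     (∃ o, applyOp n o (R.cfg j).2 = some ((R.cfg (j + 1)).2) ∧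
        R.stepHist j = histStep n o (R.cfg j).2)) := by
  have h := R.ok j hj
  unfold Run.stepHist
  revert h
  generalize hA : R.cfg j = cA
  generalize hB : R.cfg (j + 1) = cB
  generalize hL : R.lab j = lL
  intro h
  cases h with
  | read a hval htop hδ =>
      refine ⟨hval, Or.inl ⟨rfl, ?_⟩⟩
      simp only [htop, hδ]
  | op hval htop hδ happ =>
      refine ⟨hval, Or.inr ⟨_, happ, ?_⟩⟩
      simp only [htop, hδ]


theorem take_append_le {α : Type _} {l₁ l₂ : List α} {i : ℕ} (h : i ≤ l₁.length) :
    (l₁ ++ l₂).take i = l₁.take i := by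
  induction l₁ generalizing i with
  | nil => have : i = 0 := by simpa using h
           subst this; simp
  | cons a t ih =>
      cases i with
      | zero => simp
      | succ i' => simp only [List.cons_append, List.take_succ_cons, ih (by simpa using h)]

theorem set_append_last {α : Type _} (x : List α) (c y : α) (w : List α) :
    (x ++ c :: w).set x.length y = x ++ y :: w := by
  rw [List.set_append_right _ _ (le_refl _), Nat.sub_self, List.set_cons_zero]

/-- The facts about one step of a run that the proof of Statement 5 needs. -/
def SFP {Γ : Type} (n m : ℕ) (s s' : St Γ) (h : List ℕ → List ℕ) : Prop :=
  IsValid n s' ∧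
  (∀ v, (sub? s' v).isSome → (sub? s (h v)).isSome) ∧
  (∀ x c, x.length = m →
    ((h (x ++ [c]) = h x ++ [c]) ∧ (h x).length = m) ∨
    (h x = x ∧ x = topAddr s m ∧ topAddr s' m = x ∧
     c = sizeAt s (topAddr s m) ∧ sizeAt s' (topAddr s' m) = c + 1 ∧ 1 ≤ c ∧
     h (x ++ [c]) = x ++ [c - 1]))

theorem step_SFP {n : ℕ} {A Γ : Type} {D : DPDA n A Γ} (R : Run D) {j m : ℕ}
    (hj : j < R.len) (hm : m < n) :
    IsValid n (R.cfg j).2 ∧ SFP n m (R.cfg j).2 ((R.cfg (j + 1)).2) (R.stepHist j) := by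
  obtain ⟨hval, hcase⟩ := step_cases R j hj
  refine ⟨hval, ?_⟩
  rcases hcase with ⟨heq, hid⟩ | ⟨o, happ, hh⟩
  · rw [hid, heq]
    exact ⟨hval, fun v hv => hv, fun x c hx => Or.inl ⟨rfl, hx⟩⟩
  · cases o with
    | pop r =>
        simp only [applyOp] at happ
        split at happ
        · next hr =>
            obtain ⟨hval', htop', ⟨hsz', hsz2⟩, hszlt, hsome⟩ :=
              pop_facts hr.1 hr.2 hval happ
            rw [hh]
            refine ⟨hval', ?_, ?_⟩
            · intro v hv
              rw [histStep_pop]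
              exact hsome v hv
            · intro x c hx
              rw [histStep_pop, histStep_pop]
              exact Or.inl ⟨rfl, hx⟩
        · exact (Option.some_ne_none _ happ.symm).elim
    | push r γ =>
        simp only [applyOp] at happ
        split at happ
        · next hr =>
            obtain ⟨hval', htop', hsz', hszlt, hsome⟩ :=
              push_facts hr.1 hr.2 hval happ
            rw [hh]
            refine ⟨hval', hsome, ?_⟩
            intro x c hx
            set s := (R.cfg j).2
            set s' := (R.cfg (j + 1)).2
            have htalen : (topAddr s (n - r)).length = n - r :=
              topAddr_length hval _ (by omega)
            have hiff : ∀ v : List ℕ,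
                histStep n (Op.push r γ) s v =
                  if v.take (n - r + 1) =
                      topAddr s (n - r) ++ [sizeAt s (topAddr s (n - r))] then
                    v.set (n - r) (sizeAt s (topAddr s (n - r)) - 1)
                  else v := fun v => histStep_push n r γ s v
            rcases Nat.lt_trichotomy (n - r) m with h1 | h2 | h3
            · -- the push is at a level above the tracked one
              by_cases hcond : (x ++ [c]).take (n - r + 1) =
                  topAddr s (n - r) ++ [sizeAt s (topAddr s (n - r))]
              · have hcondx : x.take (n - r + 1) =
                    topAddr s (n - r) ++ [sizeAt s (topAddr s (n - r))] := by
                  rw [← hcond, take_append_le (by omega)]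
                refine Or.inl ⟨?_, ?_⟩
                · rw [hiff, hiff, if_pos hcond, if_pos hcondx,
                    List.set_append_left _ _ (by omega)]
                · rw [hiff, if_pos hcondx]
                  simp [hx]
              · have hcondx : ¬ x.take (n - r + 1) =
                    topAddr s (n - r) ++ [sizeAt s (topAddr s (n - r))] := by
                  rw [take_append_le (α := ℕ) (l₂ := [c]) (by omega)] at hcond
                  exact hcond
                refine Or.inl ⟨?_, ?_⟩
                · rw [hiff, hiff, if_neg hcond, if_neg hcondx]
                · rw [hiff, if_neg hcondx]; exact hx
            · -- the push is at exactly the tracked level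
              have hxid : histStep n (Op.push r γ) s x = x := by
                rw [hiff]
                apply if_neg
                intro hc
                have := congrArg List.length hc
                rw [List.length_take] at this
                simp [htalen, hx] at this
                omega
              by_cases hcond : x = topAddr s (n - r) ∧ c = sizeAt s (topAddr s (n - r))
              · obtain ⟨hcx, hcc⟩ := hcond
                have hcondp : (x ++ [c]).take (n - r + 1) =
                    topAddr s (n - r) ++ [sizeAt s (topAddr s (n - r))] := by
                  rw [List.take_of_length_le (by simp [hx]; omega), hcx, hcc]
                obtain ⟨lt, hlt, hltne, hltsz⟩ := sizeAt_topAddr hval (d := n - r) (by omega)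
                have hc1le : 1 ≤ sizeAt s (topAddr s (n - r)) := by
                  rw [hltsz]
                  have : lt.length ≠ 0 := fun hc => hltne (List.length_eq_zero_iff.mp hc)
                  omega
                refine Or.inr ⟨hxid, by rw [h2] at hcx; exact hcx, ?_, ?_, ?_, ?_, ?_⟩
                · rw [← h2, htop' (n - r) (le_refl _), ← hcx]
                · rw [← h2]; exact hcc
                · rw [← h2, htop' (n - r) (le_refl _), hsz', ← hcc]
                · exact le_trans hc1le (le_of_eq hcc.symm)
                · rw [hiff, if_pos hcondp, ← hcc, h2, ← hx, set_append_last]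
              · refine Or.inl ⟨?_, by rw [hxid]; exact hx⟩
                rw [hxid, hiff]
                apply if_neg
                intro hc
                rw [List.take_of_length_le (by simp [hx]; omega)] at hc
                have := List.append_inj' hc (by simp)
                exact hcond ⟨this.1, by simpa using this.2⟩
            · -- the push is at a level below the tracked one
              have hclen : ∀ v : List ℕ, v.length ≤ n - r →
                  histStep n (Op.push r γ) s v = v := by
                intro v hvlen
                rw [hiff]
                apply if_neg
                intro hc
                have := congrArg List.length hc
                rw [List.length_take] at this
                simp [htalen] at this
                omega
              rw [hclen (x ++ [c]) (by simp [hx]; omega), hclen x (by omega)]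
              exact Or.inl ⟨rfl, hx⟩
        · exact (Option.some_ne_none _ happ.symm).elim


theorem down_ind {len : ℕ} {Q : ℕ → Prop} (hbase : Q len)
    (hstep : ∀ i, i < len → Q (i + 1) → Q i) : ∀ i ≤ len, Q i := by
  have key : ∀ d i, i + d = len → Q i := by
    intro d
    induction d with
    | zero =>
        intro i h
        have : i = len := by omega
        subst this
        exact hbase
    | succ d ih => intro i h; exact hstep i (by omega) (ih (i + 1) (by omega))
  intro i hi
  exact key (len - i) i (by omega)

section RunLemmas

variable {n : ℕ} {A Γ : Type} {D : DPDA n A Γ}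

theorem histTo_of_le (R : Run D) {i j : ℕ} (h : j ≤ i) (p : List ℕ) :
    R.histTo i j p = p := by
  cases j with
  | zero => rfl
  | succ j' => simp only [Run.histTo, if_pos h]

theorem histTo_succ_left (R : Run D) {i j : ℕ} (h : i < j) (p : List ℕ) :
    R.histTo i j p = R.stepHist i (R.histTo (i + 1) j p) := by
  induction j generalizing p with
  | zero => omega
  | succ j' ih =>
      rcases Nat.lt_or_ge i j' with hij | hij
      · rw [show Run.histTo R i (j' + 1) p =
            R.histTo i j' (R.stepHist j' p) by
            simp only [Run.histTo, if_neg (by omega : ¬ j' + 1 ≤ i)],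
          show Run.histTo R (i + 1) (j' + 1) p =
            R.histTo (i + 1) j' (R.stepHist j' p) by
            simp only [Run.histTo, if_neg (by omega : ¬ j' + 1 ≤ i + 1)]]
        exact ih hij _
      · have hij' : i = j' := by omega
        subst hij'
        rw [show Run.histTo R i (i + 1) p = R.histTo i i (R.stepHist i p) by
            simp only [Run.histTo, if_neg (by omega : ¬ i + 1 ≤ i)]]
        rw [histTo_of_le R (le_refl i), histTo_of_le R (le_refl (i + 1))]

theorem sub_stepHist (R : Run D) (i j t : ℕ) :
    (R.sub i j).stepHist t = R.stepHist (i + t) := rfl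

theorem sub_histTo (R : Run D) (i j : ℕ) :
    ∀ t p, (R.sub i j).histTo 0 t p = R.histTo i (i + t) p := by
  intro t
  induction t with
  | zero =>
      intro p
      rw [histTo_of_le _ (by omega), histTo_of_le _ (by omega : i + 0 ≤ i)]
  | succ t' ih =>
      intro p
      rw [show Run.histTo (R.sub i j) 0 (t' + 1) p =
          (R.sub i j).histTo 0 t' ((R.sub i j).stepHist t' p) by
          simp only [Run.histTo, if_neg (by omega : ¬ t' + 1 ≤ 0)]]
      rw [show Run.histTo R i (i + (t' + 1)) p =
          R.histTo i (i + t') (R.stepHist (i + t') p) by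
          rw [show i + (t' + 1) = (i + t') + 1 by omega]
          simp only [Run.histTo, if_neg (by omega : ¬ (i + t') + 1 ≤ i)]]
      rw [ih, sub_stepHist]

/-- The address in `R(i)` of the origin of the topmost `(n-m)`-stack of `R(|R|)`. -/
def AA (R : Run D) (m i : ℕ) : List ℕ :=
  R.histTo i R.len (topAddr (R.cfg R.len).2 m)

/-- The address in `R(i)` of the origin of the topmost `(n-m-1)`-stack of `R(|R|)`. -/
def BB (R : Run D) (m i : ℕ) : List ℕ :=
  R.histTo i R.len (topAddr (R.cfg R.len).2 (m + 1))

/-- The last entry of `BB`. -/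
def cc (R : Run D) (m i : ℕ) : ℕ := (BB R m i).getLastD 0

theorem AA_len (R : Run D) (m : ℕ) : AA R m R.len = topAddr (R.cfg R.len).2 m :=
  histTo_of_le R (le_refl _) _

theorem BB_len (R : Run D) (m : ℕ) : BB R m R.len = topAddr (R.cfg R.len).2 (m + 1) :=
  histTo_of_le R (le_refl _) _

theorem AA_step (R : Run D) {m i : ℕ} (hi : i < R.len) :
    AA R m i = R.stepHist i (AA R m (i + 1)) := histTo_succ_left R hi _

theorem BB_step (R : Run D) {m i : ℕ} (hi : i < R.len) :
    BB R m i = R.stepHist i (BB R m (i + 1)) := histTo_succ_left R hi _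

theorem upper_iff_AA (R : Run D) {k : ℕ} (hk : k ≤ n) {i : ℕ} (hi : i ≤ R.len) :
    ((R.sub i R.len).IsUpper k ↔ AA R (n - k) i = topAddr (R.cfg i).2 (n - k)) := by
  unfold Run.IsUpper
  have hsublen : (R.sub i R.len).len = R.len - i := by
    simp [Run.sub]
  have hcfg0 : (R.sub i R.len).cfg 0 = R.cfg i := by
    show R.cfg (i + 0) = R.cfg i
    rw [Nat.add_zero]
  have hcfglen : (R.sub i R.len).cfg ((R.sub i R.len).len) = R.cfg R.len := by
    show R.cfg (i + (R.sub i R.len).len) = R.cfg R.len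
    rw [hsublen, show i + (R.len - i) = R.len by omega]
  rw [hsublen, hcfg0, show (R.sub i R.len).cfg (R.len - i) = R.cfg R.len from
    by rw [← hsublen]; exact hcfglen]
  rw [sub_histTo R i R.len (R.len - i), show i + (R.len - i) = R.len by omega]
  exact Iff.rfl

theorem run_valid (R : Run D) (hlen : 0 < R.len) (hn : 0 < n) :
    ∀ i ≤ R.len, IsValid n (R.cfg i).2 := by
  intro i hi
  rcases Nat.lt_or_ge i R.len with h | h
  · exact (step_SFP R h (m := 0) hn).1
  · have hieq : i = R.len := by omega
    subst hieq
    obtain ⟨e, he⟩ : ∃ e, R.len = e + 1 := ⟨R.len - 1, by omega⟩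
    have := (step_SFP R (j := e) (by omega) (m := 0) hn).2.1
    rw [← he] at this
    exact this

theorem run_Q (R : Run D) {m : ℕ} (hm : m < n) (hlen : 0 < R.len) :
    ∀ i ≤ R.len, BB R m i = AA R m i ++ [cc R m i] ∧ (AA R m i).length = m ∧
      (sub? (R.cfg i).2 (BB R m i)).isSome := by
  have hval := run_valid R hlen (by omega)
  have key : ∀ i ≤ R.len, (∃ x, BB R m i = AA R m i ++ [x]) ∧
      (AA R m i).length = m ∧ (sub? (R.cfg i).2 (BB R m i)).isSome := by
    refine down_ind ?_ ?_
    · have hv := hval R.len (le_refl _)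
      refine ⟨⟨sizeAt (R.cfg R.len).2 (topAddr (R.cfg R.len).2 m) - 1, ?_⟩, ?_, ?_⟩
      · rw [AA_len, BB_len]
        exact topAddr_succ hv m hm
      · rw [AA_len]; exact topAddr_length hv m (by omega)
      · rw [BB_len]
        obtain ⟨t, ht, _⟩ := sub?_topAddr hv (m + 1) (by omega)
        rw [ht]; rfl
    · intro i hi ⟨⟨x, hx⟩, hAlen, hsome⟩
      obtain ⟨hvi, hSFP⟩ := step_SFP R hi hm
      obtain ⟨hval', hs, hsplit⟩ := hSFP
      rcases hsplit (AA R m (i + 1)) x hAlen with ⟨he, hlen'⟩ | ⟨hxx, _, _, _, _, _, he⟩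
      · refine ⟨⟨x, ?_⟩, ?_, ?_⟩
        · rw [BB_step R hi, AA_step R hi, hx, he]
        · rw [AA_step R hi]; exact hlen'
        · rw [BB_step R hi]
          exact hs _ hsome
      · refine ⟨⟨x - 1, ?_⟩, ?_, ?_⟩
        · rw [BB_step R hi, AA_step R hi, hx, he, hxx]
        · rw [AA_step R hi, hxx]; exact hAlen
        · rw [BB_step R hi]
          exact hs _ hsome
  intro i hi
  obtain ⟨⟨x, hx⟩, h2, h3⟩ := key i hi
  have hccx : cc R m i = x := by rw [cc, hx, List.getLastD_concat]
  rw [← hccx] at hx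
  exact ⟨hx, h2, h3⟩

theorem run_step_cc (R : Run D) {m : ℕ} (hm : m < n) (hlen : 0 < R.len)
    {i : ℕ} (hi : i < R.len) :
    cc R m i ≤ cc R m (i + 1) ∧
    (cc R m i ≠ cc R m (i + 1) →
      AA R m i = topAddr (R.cfg i).2 m ∧
      cc R m i + 1 = sizeAt (R.cfg i).2 (topAddr (R.cfg i).2 m)) := by
  obtain ⟨hB1, hAlen1, _⟩ := run_Q R hm hlen (i + 1) (by omega)
  obtain ⟨hvi, hval', hs, hsplit⟩ := step_SFP R hi hm
  have hBi : BB R m i = R.stepHist i (BB R m (i + 1)) := BB_step R hi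
  have hAi : AA R m i = R.stepHist i (AA R m (i + 1)) := AA_step R hi
  rcases hsplit (AA R m (i + 1)) (cc R m (i + 1)) hAlen1 with
    ⟨he, hlen'⟩ | ⟨hxx, htop, _, hsz, _, hposx, he⟩
  · have : BB R m i = R.stepHist i (AA R m (i + 1)) ++ [cc R m (i + 1)] := by
      rw [hBi, hB1, he]
    have hcceq : cc R m i = cc R m (i + 1) := by
      rw [cc, this, List.getLastD_concat]
    exact ⟨le_of_eq hcceq, fun hq => absurd hcceq hq⟩
  · have hBB : BB R m i = AA R m (i + 1) ++ [cc R m (i + 1) - 1] := by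
      rw [hBi, hB1, he]
    have hcceq : cc R m i = cc R m (i + 1) - 1 := by
      rw [cc, hBB, List.getLastD_concat]
    constructor
    · omega
    · intro _
      refine ⟨?_, ?_⟩
      · rw [hAi, hxx, htop]
      · rw [hcceq, ← hsz]
        omega

theorem run_cc_mono (R : Run D) {m : ℕ} (hm : m < n) (hlen : 0 < R.len) :
    ∀ i j, i ≤ j → j ≤ R.len → cc R m i ≤ cc R m j := by
  intro i j hij hj
  induction j with
  | zero => interval_cases i; exact le_refl _
  | succ j' ih =>
      rcases Nat.lt_or_ge i (j' + 1) with h | h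
      · exact le_trans (ih (by omega) (by omega))
          (run_step_cc R hm hlen (by omega)).1
      · have : i = j' + 1 := by omega
        subst this; exact le_refl _

end RunLemmas

end Aux







/-- Let `1 ≤ k ≤ n` and let `R` be a `k`-upper run of an `n`-DPDA.
Then `R` is `(k-1)`-upper iff `|top^k(R(0))| ≤ |top^k(R(i))|` for each `i ∈ [0,|R|]` such
that the suffix `R[i,|R|]` is `k`-upper. -/
theorem statement5 {n : ℕ} (hn : 1 ≤ n) {A Γ : Type} [Finite A] [Finite Γ]
    {D : DPDA n A Γ} (k : ℕ) (hk1 : 1 ≤ k) (hk : k ≤ n) (R : Run D)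
    (hup : R.IsUpper k) :
    R.IsUpper (k - 1) ↔
      ∀ i ≤ R.len, (R.sub i R.len).IsUpper k →
        sizeAt (R.cfg 0).2 (topAddr (R.cfg 0).2 (n - k)) ≤
          sizeAt (R.cfg i).2 (topAddr (R.cfg i).2 (n - k)) := by
  have hm : n - k < n := by omega
  by_cases hlen : R.len = 0
  · constructor
    · intro _ i hi _
      have : i = 0 := by omega
      subst this
      exact le_refl _
    · intro _
      show R.IsUpper (k - 1)
      unfold Run.IsUpper
      rw [hlen, histTo_of_le R (le_refl 0)]
  · have hlen' : 0 < R.len := by omega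
    have hval := run_valid R hlen' (by omega)
    have hupA : ∀ i ≤ R.len,
        ((R.sub i R.len).IsUpper k ↔ AA R (n - k) i = topAddr (R.cfg i).2 (n - k)) :=
      fun i hi => upper_iff_AA R hk hi
    have hQ := run_Q R (m := n - k) hm hlen'
    have hA0 : AA R (n - k) 0 = topAddr (R.cfg 0).2 (n - k) := hup
    have hsize : ∀ i ≤ R.len, AA R (n - k) i = topAddr (R.cfg i).2 (n - k) →
        cc R (n - k) i < sizeAt (R.cfg i).2 (topAddr (R.cfg i).2 (n - k)) := by
      intro i hi hAi
      obtain ⟨hB, hAlen, hsome⟩ := hQ i hi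
      obtain ⟨l, hl, hlne, hlsz⟩ := sizeAt_topAddr (hval i hi) hm
      rw [hB, hAi, sub?_append, hl, Option.bind_some, sub?_cons] at hsome
      rw [hlsz]
      by_contra hge
      rw [List.getElem?_eq_none (by omega)] at hsome
      simp at hsome
    have hpos : ∀ i ≤ R.len, 1 ≤ sizeAt (R.cfg i).2 (topAddr (R.cfg i).2 (n - k)) := by
      intro i hi
      obtain ⟨l, hl, hlne, hlsz⟩ := sizeAt_topAddr (hval i hi) hm
      rw [hlsz]
      have : l.length ≠ 0 := fun hc => hlne (List.length_eq_zero_iff.mp hc)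
      omega
    have hclen : cc R (n - k) R.len + 1 =
        sizeAt (R.cfg R.len).2 (topAddr (R.cfg R.len).2 (n - k)) := by
      have hBl : BB R (n - k) R.len = topAddr (R.cfg R.len).2 (n - k) ++
          [sizeAt (R.cfg R.len).2 (topAddr (R.cfg R.len).2 (n - k)) - 1] := by
        rw [BB_len]
        exact topAddr_succ (hval R.len (le_refl _)) _ hm
      have h1 : cc R (n - k) R.len =
          sizeAt (R.cfg R.len).2 (topAddr (R.cfg R.len).2 (n - k)) - 1 := by
        rw [cc, hBl, List.getLastD_concat]
      have := hpos R.len (le_refl _)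
      omega
    have hLHS : (R.IsUpper (k - 1)) ↔ cc R (n - k) 0 + 1 =
        sizeAt (R.cfg 0).2 (topAddr (R.cfg 0).2 (n - k)) := by
      obtain ⟨hB, hAlen, _⟩ := hQ 0 (by omega)
      have hIU : R.IsUpper (k - 1) ↔
          BB R (n - k) 0 = topAddr (R.cfg 0).2 ((n - k) + 1) := by
        unfold Run.IsUpper BB
        rw [show n - (k - 1) = (n - k) + 1 from by omega]
      have hq0 : topAddr (R.cfg 0).2 ((n - k) + 1) = topAddr (R.cfg 0).2 (n - k) ++
          [sizeAt (R.cfg 0).2 (topAddr (R.cfg 0).2 (n - k)) - 1] :=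
        topAddr_succ (hval 0 (by omega)) _ hm
      rw [hIU, hq0, hB, hA0]
      have hp0 := hpos 0 (by omega)
      constructor
      · intro h
        have h2 := (List.append_inj' h (by simp)).2
        have h3 : cc R (n - k) 0 =
            sizeAt (R.cfg 0).2 (topAddr (R.cfg 0).2 (n - k)) - 1 := by
          simpa using h2
        omega
      · intro h
        have h2 : cc R (n - k) 0 =
            sizeAt (R.cfg 0).2 (topAddr (R.cfg 0).2 (n - k)) - 1 := by omega
        rw [h2]
    rw [hLHS]
    constructor
    · intro h0 i hi hiU
      have hAi := (hupA i hi).mp hiU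
      have h1 := hsize i hi hAi
      have h2 := run_cc_mono R hm hlen' 0 i (by omega) hi
      have h3 := hpos 0 (by omega)
      omega
    · intro H
      have hc0 := hsize 0 (by omega) hA0
      by_contra hne
      have hc0lt : cc R (n - k) 0 + 1 <
          sizeAt (R.cfg 0).2 (topAddr (R.cfg 0).2 (n - k)) := by omega
      have hAlen2 : AA R (n - k) R.len = topAddr (R.cfg R.len).2 (n - k) := AA_len R _
      have hZlen := H R.len (le_refl _) ((hupA R.len (le_refl _)).mpr hAlen2)
      have hPlen : cc R (n - k) 0 < cc R (n - k) R.len := by omega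
      have hPex : ∃ j, cc R (n - k) 0 < cc R (n - k) j := ⟨R.len, hPlen⟩
      have hPj' : cc R (n - k) 0 < cc R (n - k) (Nat.find hPex) := Nat.find_spec hPex
      have hj'le : Nat.find hPex ≤ R.len := Nat.find_le hPlen
      have hj'pos : Nat.find hPex ≠ 0 := by
        intro hc
        rw [hc] at hPj'
        omega
      set j := Nat.find hPex - 1 with hj
      have hjlt : j < Nat.find hPex := by omega
      have hjR : j < R.len := by omega
      have hcj : cc R (n - k) j = cc R (n - k) 0 := by
        have h1 : ¬ cc R (n - k) 0 < cc R (n - k) j := Nat.find_min hPex hjlt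
        have h2 := run_cc_mono R hm hlen' 0 j (by omega) (by omega)
        omega
      have hcne : cc R (n - k) j ≠ cc R (n - k) (j + 1) := by
        have hj1 : j + 1 = Nat.find hPex := by omega
        rw [hj1, hcj]
        omega
      obtain ⟨hAj, hcjsz⟩ := (run_step_cc R hm hlen' hjR).2 hcne
      have hZj := H j (by omega) ((hupA j (by omega)).mpr hAj)
      omega

end HOPDA
end
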